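/- arXiv:2203.08109 — 2 statements merged into one kernel-verified Lean document; each statement's English description precedes it below -/
import Mathlib

section
/- (Fourier-analytic Koksma inequality) If f : O → ℝ is a continuous function and X is a finite nonempty subset of O with discrepancy Δ(X), then |(1/|X|)·Σ_{x∈X} f(x) − ∫_O f dμ| ≤ V_Fourier(f)·Δ(X). -/
open MeasureTheory Set Filter Topology
open scoped ENNReal NNReal

noncomputable section

namespace NAKoksma

variable (K : Type*) [NontriviallyNormedField K] [IsUltrametricDist K]

/-- The ring of integers `O = {x : K | ‖x‖ ≤ 1}` of a non-Archimedean normed field. -/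
def RoI : Subring K where
  carrier := {x : K | ‖x‖ ≤ 1}
  mul_mem' := fun {a b} ha hb => by
    simp only [Set.mem_setOf_eq] at *
    calc ‖a * b‖ = ‖a‖ * ‖b‖ := norm_mul a b
      _ ≤ 1 * 1 := mul_le_mul ha hb (norm_nonneg b) zero_le_one
      _ = 1 := one_mul 1
  one_mem' := by simp
  add_mem' := fun {a b} ha hb => by
    simp only [Set.mem_setOf_eq] at *
    exact (IsUltrametricDist.norm_add_le_max a b).trans (max_le ha hb)
  zero_mem' := by simp
  neg_mem' := fun {a} ha => by
    simp only [Set.mem_setOf_eq, norm_neg] at *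
    exact ha

variable (q : ℕ)

/-- The disc of radius `q ^ (-n)` centered at `a` in the ring of integers. -/
def disc (a : RoI K) (n : ℕ) : Set (RoI K) :=
  {x : RoI K | ‖(x : K) - (a : K)‖ ≤ (q : ℝ) ^ (-(n : ℤ))}

/-- A subset of `O` is a disc if it is of the form `D_r(a)` with `r = q^(-n)`, `0 < r ≤ 1`. -/
def IsDisc (D : Set (RoI K)) : Prop := ∃ (a : RoI K) (n : ℕ), D = disc K q a n

/-- A Taibleson partition: a finite collection of discs partitioning `O`. -/
def IsTaibPartition (P : Finset (Set (RoI K))) : Prop :=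
  (∀ D ∈ P, IsDisc K q D) ∧ (P : Set (Set (RoI K))).PairwiseDisjoint id ∧
    ⋃₀ (P : Set (Set (RoI K))) = Set.univ

/-- `V_Π(f) = Σ_{D ∈ Π} sup_{x,y ∈ D} (f x - f y)`, valued in `[0,∞]`. -/
def VPi (f : RoI K → ℝ) (P : Finset (Set (RoI K))) : ℝ≥0∞ :=
  ∑ D ∈ P, ⨆ x ∈ D, ⨆ y ∈ D, ENNReal.ofReal (f x - f y)

/-- The Taibleson variation `V_Taib(f) = sup_Π V_Π(f)`. -/
def VTaib (f : RoI K → ℝ) : ℝ≥0∞ :=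
  ⨆ P : {P : Finset (Set (RoI K)) // IsTaibPartition K q P}, VPi K f P.1

variable [MeasurableSpace K]

/-- The discrepancy `Δ(X) = sup_D | |X ∩ D| / |X| - μ(D) |` of a finite set `X ⊆ O`. -/
def discrepancy (μ : Measure (RoI K)) (X : Finset (RoI K)) : ℝ :=
  ⨆ D : {D : Set (RoI K) // IsDisc K q D},
    |(Nat.card ↥((X : Set (RoI K)) ∩ D.1) : ℝ) / (X.card : ℝ) - (μ D.1).toReal|

variable (π : RoI K)

/-- The `i`-th point `m_i = a_0 + a_1 π + ⋯ + a_{λ-1} π^{λ-1}` in the dictionary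
ordering of the coefficient strings `(a_0, …, a_{λ-1})` with respect to the
indexing of the coset representatives `S`. -/
def beerPoint (S : ℕ → RoI K) (lam i : ℕ) : RoI K :=
  ∑ j ∈ Finset.range lam, S (i / q ^ (lam - 1 - j) % q) * π ^ j

/-- `V_λ(f) = sup_{x_i ∈ E_i} Σ_{i=1}^{q^λ - 1} |f(x_i) - f(x_{i-1})|` over the ordered Beer
partition `E_0, …, E_{q^λ - 1}` of level `λ`. -/
def VBeerLevel (S : ℕ → RoI K) (f : RoI K → ℝ) (lam : ℕ) : ℝ≥0∞ :=
  ⨆ x : {x : ℕ → RoI K // ∀ i < q ^ lam, x i ∈ disc K q (beerPoint K q π S lam i) lam},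
    ∑ i ∈ Finset.Ico 1 (q ^ lam), ENNReal.ofReal |f (x.1 i) - f (x.1 (i - 1))|

/-- The Beer variation `V_Beer(f) = lim_{λ→∞} V_λ(f) = sup_{λ ≥ 1} V_λ(f)`. -/
def VBeer (S : ℕ → RoI K) (f : RoI K → ℝ) : ℝ≥0∞ :=
  ⨆ lam : ℕ, VBeerLevel K q π S f (lam + 1)

/-- `S : ℕ → O` (through indices `0, …, q-1`) is a complete ordered system of coset
representatives for the residue field `O/πO`, containing `0`. -/
def IsRepSystem (S : ℕ → RoI K) : Prop :=
  (∃ i, i < q ∧ S i = 0) ∧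
    Function.Bijective fun i : Fin q => Ideal.Quotient.mk (Ideal.span {π}) (S (i : ℕ))

/-- The Berkovich-analytic variation
`V_Berk(f) = Σ_D Σ_{D' ≺ D} |f(D') - f(D)|`, where `D' ≺ D` means `D' ⊆ D` and
`μ(D') = μ(D)/q`, and `f(D)` denotes the average of `f` over `D`. -/
def VBerk (μ : Measure (RoI K)) (f : RoI K → ℝ) : ℝ≥0∞ :=
  ∑' D : {D : Set (RoI K) // IsDisc K q D},
    ∑' D' : {D' : Set (RoI K) // IsDisc K q D' ∧ D' ⊆ D.1 ∧ μ D' = μ D.1 / (q : ℝ≥0∞)},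
      ENNReal.ofReal |(⨍ x in D'.1, f x ∂μ) - ⨍ x in D.1, f x ∂μ|

/-- The level `ℓ(γ)` of a character `γ : O → 𝕋`: the least `ℓ ≥ 0` such that `γ` is trivial
on `π^ℓ O`. -/
def charLevel (γ : AddChar (RoI K) Circle) : ℕ :=
  sInf {l : ℕ | ∀ y : RoI K, γ (π ^ l * y) = 1}

/-- The Fourier coefficient `f̂(γ) = ∫_O f(x) conj(γ(x)) dμ(x)`. -/
def fourierCoeff (μ : Measure (RoI K)) (f : RoI K → ℂ) (γ : AddChar (RoI K) Circle) : ℂ :=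
  ∫ x, f x * (starRingEnd ℂ) ((γ x : Circle) : ℂ) ∂μ

/-- The Fourier-analytic variation `V_Fourier(f) = Σ_{γ ≠ γ₀} q^{ℓ(γ)} |f̂(γ)|`, the sum over
all nontrivial continuous characters of `O`. -/
def VFourier (μ : Measure (RoI K)) (f : RoI K → ℝ) : ℝ≥0∞ :=
  ∑' γ : {γ : AddChar (RoI K) Circle // Continuous ⇑γ ∧ γ ≠ 1},
    ENNReal.ofReal ((q : ℝ) ^ charLevel K π γ.1 * ‖fourierCoeff K μ (fun x => (f x : ℂ)) γ.1‖)

/-- A function is a finite linear combination of characteristic functions of discs. -/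
def IsDiscSimple (g : RoI K → ℝ) : Prop :=
  ∃ (P : Finset (Set (RoI K))) (c : Set (RoI K) → ℝ),
    (∀ D ∈ P, IsDisc K q D) ∧ g = fun x => ∑ D ∈ P, c D * D.indicator 1 x

/-- Integrability in the sense of Beer: `f` can be squeezed between finite linear combinations
of characteristic functions of discs with integrals converging to each other. -/
def BeerIntegrable [MeasurableSpace K] (μ : Measure (RoI K)) (f : RoI K → ℝ) : Prop :=
  ∃ u v : ℕ → RoI K → ℝ,
    (∀ n, IsDiscSimple K q (u n)) ∧ (∀ n, IsDiscSimple K q (v n)) ∧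
    (∀ n x, u n x ≤ f x ∧ f x ≤ v n x) ∧
    Tendsto (fun n => ∫ x, (v n x - u n x) ∂μ) atTop (𝓝 0)

variable [LocallyCompactSpace K] [BorelSpace K]
section AuxKoksma
set_option linter.unusedSectionVars false

/-! ### Basic norm facts -/

lemma aux_norm_le_one (x : RoI K) : ‖(x : K)‖ ≤ 1 := x.2

lemma aux_coe_pow (n : ℕ) : ((π ^ n : RoI K) : K) = (π : K) ^ n := by
  induction n with
  | zero => simp
  | succ m ih => rw [pow_succ, pow_succ, ← ih]; rfl

lemma aux_norm_pow (hπ : ‖(π : K)‖ = (q : ℝ)⁻¹) (n : ℕ) :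
    ‖((π ^ n : RoI K) : K)‖ = (q : ℝ) ^ (-(n : ℤ)) := by
  rw [aux_coe_pow, norm_pow, hπ, zpow_neg, zpow_natCast, inv_pow]

lemma aux_coe_sub (x y : RoI K) : ((x - y : RoI K) : K) = (x : K) - (y : K) := rfl

/-! ### The subgroups `π^n O` -/

/-- The subgroup `{x : O | ‖x‖ ≤ q ^ (-n)}` of the additive group of `O`. -/
def Hgp (n : ℕ) : AddSubgroup (RoI K) where
  carrier := {x : RoI K | ‖(x : K)‖ ≤ (q : ℝ) ^ (-(n : ℤ))}
  zero_mem' := by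
    simp only [Set.mem_setOf_eq, ZeroMemClass.coe_zero, norm_zero]
    exact zpow_nonneg (by positivity) _
  add_mem' := fun {a b} ha hb => by
    simp only [Set.mem_setOf_eq] at *
    exact le_trans (IsUltrametricDist.norm_add_le_max _ _) (max_le ha hb)
  neg_mem' := fun {a} ha => by
    simp only [Set.mem_setOf_eq] at *
    simpa using ha

lemma aux_mem_Hgp {n : ℕ} {x : RoI K} :
    x ∈ Hgp K q n ↔ ‖(x : K)‖ ≤ (q : ℝ) ^ (-(n : ℤ)) := Iff.rfl

lemma aux_mem_disc {a x : RoI K} {n : ℕ} :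
    x ∈ disc K q a n ↔ ‖(x : K) - (a : K)‖ ≤ (q : ℝ) ^ (-(n : ℤ)) := Iff.rfl

lemma aux_mem_disc' {a x : RoI K} {n : ℕ} :
    x ∈ disc K q a n ↔ x - a ∈ Hgp K q n := Iff.rfl

lemma aux_mem_Hgp_iff (hq : 0 < q) (hπ : ‖(π : K)‖ = (q : ℝ)⁻¹) (n : ℕ) (x : RoI K) :
    x ∈ Hgp K q n ↔ ∃ y : RoI K, x = π ^ n * y := by
  have hq0 : (0 : ℝ) < (q : ℝ) := by exact_mod_cast hq
  have hr0 : (0 : ℝ) < (q : ℝ) ^ (-(n : ℤ)) := zpow_pos hq0 _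
  have hπn : ‖((π ^ n : RoI K) : K)‖ = (q : ℝ) ^ (-(n : ℤ)) := aux_norm_pow K q π hπ n
  have hπn0 : ((π ^ n : RoI K) : K) ≠ 0 := by
    intro h
    rw [h, norm_zero] at hπn
    exact hr0.ne hπn
  constructor
  · intro hx
    have hy : ‖(x : K) / ((π ^ n : RoI K) : K)‖ ≤ 1 := by
      rw [norm_div, hπn, div_le_one hr0]
      exact hx
    refine ⟨⟨(x : K) / ((π ^ n : RoI K) : K), hy⟩, ?_⟩
    apply Subtype.ext
    show (x : K) = ((π ^ n : RoI K) : K) * ((x : K) / ((π ^ n : RoI K) : K))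
    rw [mul_comm, div_mul_cancel₀ _ hπn0]
  · rintro ⟨y, rfl⟩
    show ‖((π ^ n * y : RoI K) : K)‖ ≤ _
    have : ((π ^ n * y : RoI K) : K) = ((π ^ n : RoI K) : K) * (y : K) := rfl
    rw [this, norm_mul, hπn]
    calc (q : ℝ) ^ (-(n : ℤ)) * ‖(y : K)‖ ≤ (q : ℝ) ^ (-(n : ℤ)) * 1 :=
          mul_le_mul_of_nonneg_left (aux_norm_le_one K y) hr0.le
      _ = _ := mul_one _

lemma aux_zpow_succ (hq : 0 < q) (n : ℕ) :
    (q : ℝ) ^ (-((n + 1 : ℕ) : ℤ)) = (q : ℝ) ^ (-(n : ℤ)) * (q : ℝ)⁻¹ := by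
  have hq0 : ((q : ℝ)) ≠ 0 := Nat.cast_ne_zero.mpr hq.ne'
  rw [← zpow_neg_one, ← zpow_add₀ hq0]
  congr 1
  push_cast
  ring

/-! ### Digit expansions and cardinality of the quotients -/

lemma aux_span_eq_Hgp (hq : 0 < q) (hπ : ‖(π : K)‖ = (q : ℝ)⁻¹) (x : RoI K) :
    x ∈ (Ideal.span {π} : Ideal (RoI K)) ↔ x ∈ Hgp K q 1 := by
  rw [Ideal.mem_span_singleton', aux_mem_Hgp_iff K q π hq hπ 1 x]
  constructor
  · rintro ⟨a, rfl⟩; exact ⟨a, by rw [pow_one, mul_comm]⟩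
  · rintro ⟨y, rfl⟩; exact ⟨y, by rw [pow_one, mul_comm]⟩

lemma aux_digits (hq : 0 < q) (hπ : ‖(π : K)‖ = (q : ℝ)⁻¹)
    (s : (RoI K ⧸ (Ideal.span {π} : Ideal (RoI K))) → RoI K)
    (hs : ∀ c, Ideal.Quotient.mk _ (s c) = c) (m : ℕ) (x : RoI K) :
    ∃ t : Fin m → (RoI K ⧸ (Ideal.span {π} : Ideal (RoI K))),
      (x - ∑ j, s (t j) * π ^ (j : ℕ)) ∈ Hgp K q m := by
  induction m generalizing x with
  | zero =>
    refine ⟨Fin.elim0, ?_⟩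
    simp only [Finset.univ_eq_empty, Finset.sum_empty, sub_zero]
    rw [aux_mem_Hgp]
    simpa using aux_norm_le_one K x
  | succ m ih =>
    have h1 : x - s (Ideal.Quotient.mk _ x) ∈ (Ideal.span {π} : Ideal (RoI K)) :=
      Ideal.Quotient.eq.mp (hs _).symm
    obtain ⟨y, hy⟩ := Ideal.mem_span_singleton'.mp h1
    obtain ⟨t', ht'⟩ := ih y
    refine ⟨(Fin.cons (Ideal.Quotient.mk _ x) t' : Fin (m+1) → _), ?_⟩
    have hsum : (∑ j : Fin (m + 1), s ((Fin.cons (Ideal.Quotient.mk _ x) t' : Fin (m+1) → _) j) * π ^ (j : ℕ))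
        = s (Ideal.Quotient.mk _ x) + (∑ j : Fin m, s (t' j) * π ^ (j : ℕ)) * π := by
      rw [Fin.sum_univ_succ, Finset.sum_mul]
      simp [Fin.cons_zero, Fin.cons_succ, pow_succ, mul_assoc]
    rw [hsum]
    have key : x - (s (Ideal.Quotient.mk _ x) + (∑ j : Fin m, s (t' j) * π ^ (j : ℕ)) * π)
        = (y - ∑ j : Fin m, s (t' j) * π ^ (j : ℕ)) * π := by
      linear_combination -hy
    rw [aux_mem_Hgp, key]
    have : ((((y - ∑ j : Fin m, s (t' j) * π ^ (j : ℕ)) * π : RoI K)) : K)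
        = (((y - ∑ j : Fin m, s (t' j) * π ^ (j : ℕ) : RoI K)) : K) * (π : K) := rfl
    rw [this, norm_mul, hπ, aux_zpow_succ q hq m]
    exact mul_le_mul_of_nonneg_right (((aux_mem_Hgp K q).mp ht')) (by positivity)

lemma aux_finite_res (hq : 1 < q)
    (hres : Nat.card (↥(RoI K) ⧸ (Ideal.span {π} : Ideal ↥(RoI K))) = q) :
    Finite (RoI K ⧸ (Ideal.span {π} : Ideal (RoI K))) := by
  apply Nat.finite_of_card_ne_zero
  rw [hres]
  omega

lemma aux_quot_surj (hq : 1 < q) (hπ : ‖(π : K)‖ = (q : ℝ)⁻¹) (n : ℕ) :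
    ∃ φ : (Fin n → (RoI K ⧸ (Ideal.span {π} : Ideal (RoI K)))) → (RoI K ⧸ Hgp K q n),
      Function.Surjective φ := by
  obtain ⟨s, hs⟩ : ∃ s : (RoI K ⧸ (Ideal.span {π} : Ideal (RoI K))) → RoI K,
      ∀ c, Ideal.Quotient.mk _ (s c) = c :=
    ⟨fun c => (Ideal.Quotient.mk_surjective c).choose,
      fun c => (Ideal.Quotient.mk_surjective c).choose_spec⟩
  refine ⟨fun t => QuotientAddGroup.mk (∑ j, s (t j) * π ^ (j : ℕ)), ?_⟩
  intro c
  obtain ⟨x, rfl⟩ := QuotientAddGroup.mk_surjective c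
  obtain ⟨t, ht⟩ := aux_digits K q π (by omega) hπ s hs n x
  refine ⟨t, ?_⟩
  rw [QuotientAddGroup.eq]
  rw [neg_add_eq_sub]
  exact ht

/-! ### Instances -/

instance {L : Type*} [NontriviallyNormedField L] [IsUltrametricDist L] [MeasurableSpace L]
    [BorelSpace L] : BorelSpace (RoI L) :=
  Subtype.borelSpace _

instance {L : Type*} [NontriviallyNormedField L] [IsUltrametricDist L] [LocallyCompactSpace L] :
    CompactSpace (RoI L) := by
  haveI : ProperSpace L := ProperSpace.of_nontriviallyNormedField_of_weaklyLocallyCompactSpace L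
  have h : IsCompact {x : L | ‖x‖ ≤ 1} := by
    have he : {x : L | ‖x‖ ≤ 1} = Metric.closedBall 0 1 := by
      ext x; simp [Metric.mem_closedBall, dist_zero_right]
    rw [he]; exact isCompact_closedBall 0 1
  exact isCompact_iff_compactSpace.mp h

/-! ### Finiteness and cardinality of the quotients -/

lemma aux_finite_quot (hq : 1 < q) (hπ : ‖(π : K)‖ = (q : ℝ)⁻¹)
    (hres : Nat.card (↥(RoI K) ⧸ (Ideal.span {π} : Ideal ↥(RoI K))) = q) (n : ℕ) :
    Finite (RoI K ⧸ Hgp K q n) := by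
  haveI := aux_finite_res K q π hq hres
  obtain ⟨φ, hφ⟩ := aux_quot_surj K q π hq hπ n
  exact Finite.of_surjective φ hφ

lemma aux_card_quot_le (hq : 1 < q) (hπ : ‖(π : K)‖ = (q : ℝ)⁻¹)
    (hres : Nat.card (↥(RoI K) ⧸ (Ideal.span {π} : Ideal ↥(RoI K))) = q) (n : ℕ) :
    Nat.card (RoI K ⧸ Hgp K q n) ≤ q ^ n := by
  haveI := aux_finite_res K q π hq hres
  obtain ⟨φ, hφ⟩ := aux_quot_surj K q π hq hπ n
  calc Nat.card (RoI K ⧸ Hgp K q n)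
      ≤ Nat.card (Fin n → (RoI K ⧸ (Ideal.span {π} : Ideal (RoI K)))) :=
        Nat.card_le_card_of_surjective φ hφ
    _ = q ^ n := by
        rw [Nat.card_fun, hres, Nat.card_eq_fintype_card, Fintype.card_fin]

/-! ### Topology of discs -/

lemma aux_isClosed_disc (a : RoI K) (n : ℕ) : IsClosed (disc K q a n) := by
  have h : disc K q a n
      = (fun x : RoI K => ‖(x : K) - (a : K)‖) ⁻¹' (Set.Iic ((q : ℝ) ^ (-(n : ℤ)))) := rfl
  rw [h]
  exact IsClosed.preimage ((continuous_subtype_val.sub continuous_const).norm) isClosed_Iic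

lemma aux_measurableSet_disc (a : RoI K) (n : ℕ) : MeasurableSet (disc K q a n) :=
  (aux_isClosed_disc K q a n).measurableSet

lemma aux_dist_eq (x y : RoI K) : dist x y = ‖(x : K) - (y : K)‖ := by
  rw [Subtype.dist_eq, dist_eq_norm]

lemma aux_isOpen_disc (hq : 0 < q) (a : RoI K) (n : ℕ) : IsOpen (disc K q a n) := by
  rw [Metric.isOpen_iff]
  intro x hx
  refine ⟨(q : ℝ) ^ (-(n : ℤ)), zpow_pos (by exact_mod_cast hq) _, fun y hy => ?_⟩
  rw [Metric.mem_ball, aux_dist_eq K] at hy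
  rw [aux_mem_disc] at hx ⊢
  have h : (y : K) - (a : K) = ((y : K) - (x : K)) + ((x : K) - (a : K)) := by ring
  rw [h]
  exact le_trans (IsUltrametricDist.norm_add_le_max _ _) (max_le hy.le hx)

lemma aux_mem_disc_self (a : RoI K) (n : ℕ) : a ∈ disc K q a n := by
  rw [aux_mem_disc]
  simp only [sub_self, norm_zero]
  exact zpow_nonneg (by positivity) _

lemma aux_disc_eq_of_mem {a x : RoI K} {n : ℕ} (h : x ∈ disc K q a n) :
    disc K q x n = disc K q a n := by
  rw [aux_mem_disc] at h
  ext y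
  rw [aux_mem_disc, aux_mem_disc]
  constructor <;> intro hy
  · have h2 : (y : K) - (a : K) = ((y : K) - (x : K)) + ((x : K) - (a : K)) := by ring
    rw [h2]
    exact le_trans (IsUltrametricDist.norm_add_le_max _ _) (max_le hy h)
  · have h2 : (y : K) - (x : K) = ((y : K) - (a : K)) + ((a : K) - (x : K)) := by ring
    have h3 : ‖(a : K) - (x : K)‖ ≤ (q : ℝ) ^ (-(n : ℤ)) := by rwa [norm_sub_rev]
    rw [h2]
    exact le_trans (IsUltrametricDist.norm_add_le_max _ _) (max_le hy h3)

/-! ### Quotient-disc dictionary -/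

lemma aux_mk_eq_iff {n : ℕ} {x a : RoI K} :
    (QuotientAddGroup.mk x : RoI K ⧸ Hgp K q n) = QuotientAddGroup.mk a ↔ x ∈ disc K q a n := by
  rw [QuotientAddGroup.eq, aux_mem_disc']
  constructor
  · intro h
    have h2 := (Hgp K q n).neg_mem h
    rwa [show -(-x + a) = x - a by ring] at h2
  · intro h
    have h2 := (Hgp K q n).neg_mem h
    rwa [show -(x - a) = -x + a by ring] at h2

lemma aux_out_mk {n : ℕ} (x : RoI K) :
    x ∈ disc K q (Quotient.out (QuotientAddGroup.mk x : RoI K ⧸ Hgp K q n)) n := by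
  rw [← aux_mk_eq_iff]
  rw [QuotientAddGroup.out_eq']

lemma aux_iUnion_disc (n : ℕ) :
    (⋃ g : RoI K ⧸ Hgp K q n, disc K q (Quotient.out g) n) = Set.univ := by
  ext x
  simp only [Set.mem_iUnion, Set.mem_univ, iff_true]
  exact ⟨QuotientAddGroup.mk x, aux_out_mk K q x⟩

lemma aux_disjoint_disc (n : ℕ) :
    Pairwise (Function.onFun Disjoint
      (fun g : RoI K ⧸ Hgp K q n => disc K q (Quotient.out g) n)) := by
  intro g g' hgg'
  rw [Function.onFun, Set.disjoint_left]
  intro x hx hx'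
  apply hgg'
  rw [← QuotientAddGroup.out_eq' g, ← QuotientAddGroup.out_eq' g']
  rw [← aux_mk_eq_iff] at hx hx'
  exact hx.symm.trans hx'

/-! ### Measures of discs -/

lemma aux_measure_disc (μ : Measure (RoI K)) [μ.IsAddHaarMeasure] (a : RoI K) (n : ℕ) :
    μ (disc K q a n) = μ ((Hgp K q n : Set (RoI K))) := by
  have h : disc K q a n = (fun x => -a + x) ⁻¹' ((Hgp K q n : Set (RoI K))) := by
    ext x
    simp only [Set.mem_preimage, SetLike.mem_coe]
    rw [neg_add_eq_sub, ← aux_mem_disc']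
  rw [h, measure_preimage_add]

lemma aux_card_mul_measure (hq : 1 < q) (hπ : ‖(π : K)‖ = (q : ℝ)⁻¹)
    (hres : Nat.card (↥(RoI K) ⧸ (Ideal.span {π} : Ideal ↥(RoI K))) = q)
    (μ : Measure (RoI K)) [IsProbabilityMeasure μ] [μ.IsAddHaarMeasure] (n : ℕ) :
    (Nat.card (RoI K ⧸ Hgp K q n) : ℝ≥0∞) * μ ((Hgp K q n : Set (RoI K))) = 1 := by
  haveI := aux_finite_quot K q π hq hπ hres n
  haveI : Fintype (RoI K ⧸ Hgp K q n) := Fintype.ofFinite _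
  have hμ := measure_iUnion (μ := μ) (aux_disjoint_disc K q n)
    (fun g => aux_measurableSet_disc K q _ n)
  rw [aux_iUnion_disc K q n, measure_univ, tsum_fintype] at hμ
  have h2 : ∑ g : RoI K ⧸ Hgp K q n, μ (disc K q (Quotient.out g) n)
      = ∑ _g : RoI K ⧸ Hgp K q n, μ ((Hgp K q n : Set (RoI K))) :=
    Finset.sum_congr rfl fun g _ => aux_measure_disc K q μ _ n
  rw [h2, Finset.sum_const, Finset.card_univ] at hμ
  rw [Nat.card_eq_fintype_card, ← nsmul_eq_mul]
  exact hμ.symm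

/-! ### Characters lifted from finite quotients -/

noncomputable def liftChar (n : ℕ) [Finite (RoI K ⧸ Hgp K q n)]
    (γ' : AddChar (RoI K ⧸ Hgp K q n) ℂ) : AddChar (RoI K) Circle where
  toFun x := ⟨γ' (QuotientAddGroup.mk x), mem_sphere_zero_iff_norm.2 (γ'.norm_apply _)⟩
  map_zero_eq_one' := by
    ext : 1
    show γ' (QuotientAddGroup.mk 0) = _
    have h0 : (QuotientAddGroup.mk (0 : RoI K) : RoI K ⧸ Hgp K q n) = 0 := rfl
    rw [h0, AddChar.map_zero_eq_one]
    rfl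
  map_add_eq_mul' := fun a b => by
    ext : 1
    show γ' (QuotientAddGroup.mk (a + b)) = _
    have h0 : (QuotientAddGroup.mk (a + b) : RoI K ⧸ Hgp K q n)
        = QuotientAddGroup.mk a + QuotientAddGroup.mk b := rfl
    rw [h0, AddChar.map_add_eq_mul]
    rfl

lemma aux_liftChar_coe (n : ℕ) [Finite (RoI K ⧸ Hgp K q n)]
    (γ' : AddChar (RoI K ⧸ Hgp K q n) ℂ) (x : RoI K) :
    ((liftChar K q n γ' x : Circle) : ℂ) = γ' (QuotientAddGroup.mk x) := rfl

lemma aux_liftChar_inj (n : ℕ) [Finite (RoI K ⧸ Hgp K q n)] :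
    Function.Injective (liftChar K q n) := by
  intro γ₁ γ₂ h
  apply DFunLike.ext
  intro g
  obtain ⟨x, rfl⟩ := QuotientAddGroup.mk_surjective g
  have h2 := congrArg (fun ψ : AddChar (RoI K) Circle => ((ψ x : Circle) : ℂ)) h
  exact h2

lemma aux_liftChar_ne_one (n : ℕ) [Finite (RoI K ⧸ Hgp K q n)]
    {γ' : AddChar (RoI K ⧸ Hgp K q n) ℂ} (h : γ' ≠ 0) : liftChar K q n γ' ≠ 1 := by
  intro h1
  apply h
  apply DFunLike.ext
  intro g
  obtain ⟨x, rfl⟩ := QuotientAddGroup.mk_surjective g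
  rw [AddChar.zero_apply, ← aux_liftChar_coe K q n γ' x, h1]
  rfl

lemma aux_continuous_liftChar (hq : 0 < q) (n : ℕ) [Finite (RoI K ⧸ Hgp K q n)]
    (γ' : AddChar (RoI K ⧸ Hgp K q n) ℂ) : Continuous ⇑(liftChar K q n γ') := by
  rw [continuous_iff_continuousAt]
  intro x
  apply Filter.EventuallyEq.continuousAt (y := liftChar K q n γ' x)
  have hmem : disc K q x n ∈ 𝓝 x :=
    (aux_isOpen_disc K q hq x n).mem_nhds (aux_mem_disc_self K q x n)
  filter_upwards [hmem] with y hy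
  have h1 : (QuotientAddGroup.mk y : RoI K ⧸ Hgp K q n) = QuotientAddGroup.mk x :=
    (aux_mk_eq_iff K q).mpr hy
  exact Subtype.ext (congrArg γ' h1)

lemma aux_liftChar_level (hq : 0 < q) (hπ : ‖(π : K)‖ = (q : ℝ)⁻¹) (n : ℕ)
    [Finite (RoI K ⧸ Hgp K q n)] (γ' : AddChar (RoI K ⧸ Hgp K q n) ℂ) (y : RoI K) :
    liftChar K q n γ' (π ^ n * y) = 1 := by
  have hmem : π ^ n * y ∈ Hgp K q n := (aux_mem_Hgp_iff K q π hq hπ n _).mpr ⟨y, rfl⟩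
  have h0 : (QuotientAddGroup.mk (π ^ n * y) : RoI K ⧸ Hgp K q n) = 0 :=
    (QuotientAddGroup.eq_zero_iff _).mpr hmem
  apply Subtype.ext
  show γ' (QuotientAddGroup.mk (π ^ n * y)) = _
  rw [h0, AddChar.map_zero_eq_one]
  rfl

/-! ### Character levels -/

lemma aux_charLevel_le {γ : AddChar (RoI K) Circle} {n : ℕ} (h : ∀ y, γ (π ^ n * y) = 1) :
    charLevel K π γ ≤ n := Nat.sInf_le h

lemma aux_charLevel_spec {γ : AddChar (RoI K) Circle} {n : ℕ} (h : ∀ y, γ (π ^ n * y) = 1)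
    (y : RoI K) : γ (π ^ (charLevel K π γ) * y) = 1 :=
  (Nat.sInf_mem (⟨n, h⟩ : Set.Nonempty {l : ℕ | ∀ y : RoI K, γ (π ^ l * y) = 1})) y

lemma aux_trivial_on_Hgp (hq : 0 < q) (hπ : ‖(π : K)‖ = (q : ℝ)⁻¹)
    {γ : AddChar (RoI K) Circle} {m : ℕ} (h : ∀ y, γ (π ^ m * y) = 1) :
    ∀ x ∈ Hgp K q m, γ x = 1 := by
  intro x hx
  obtain ⟨y, rfl⟩ := (aux_mem_Hgp_iff K q π hq hπ m x).mp hx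
  exact h y

lemma aux_char_congr {m : ℕ} {γ : AddChar (RoI K) Circle} (h : ∀ x ∈ Hgp K q m, γ x = 1)
    {x y : RoI K} (hxy : x - y ∈ Hgp K q m) : γ x = γ y := by
  calc γ x = γ (y + (x - y)) := by congr 1; ring
    _ = γ y * γ (x - y) := AddChar.map_add_eq_mul γ y (x - y)
    _ = γ y := by rw [h _ hxy, mul_one]

lemma aux_mk_eq_iff' {m : ℕ} {u v : RoI K} :
    (QuotientAddGroup.mk u : RoI K ⧸ Hgp K q m) = QuotientAddGroup.mk v
      ↔ u - v ∈ Hgp K q m := by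
  rw [aux_mk_eq_iff, aux_mem_disc']

/-! ### Characters descended to finite quotients -/

noncomputable def descChar (m : ℕ) (γ : AddChar (RoI K) Circle)
    (h : ∀ x ∈ Hgp K q m, γ x = 1) : AddChar (RoI K ⧸ Hgp K q m) ℂ where
  toFun g := ((γ (Quotient.out g) : Circle) : ℂ)
  map_zero_eq_one' := by
    have hmem : (Quotient.out (0 : RoI K ⧸ Hgp K q m)) ∈ Hgp K q m := by
      rw [← QuotientAddGroup.eq_zero_iff]
      exact QuotientAddGroup.out_eq' 0
    show ((γ (Quotient.out (0 : RoI K ⧸ Hgp K q m)) : Circle) : ℂ) = 1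
    rw [h _ hmem]
    rfl
  map_add_eq_mul' := fun a b => by
    have h1 : (QuotientAddGroup.mk (Quotient.out (a + b)) : RoI K ⧸ Hgp K q m)
        = QuotientAddGroup.mk (Quotient.out a + Quotient.out b) := by
      rw [QuotientAddGroup.out_eq']
      show a + b = QuotientAddGroup.mk' (Hgp K q m) (Quotient.out a + Quotient.out b)
      rw [map_add]
      show a + b = QuotientAddGroup.mk _ + QuotientAddGroup.mk _
      rw [QuotientAddGroup.out_eq', QuotientAddGroup.out_eq']
    have h2 : γ (Quotient.out (a + b)) = γ (Quotient.out a + Quotient.out b) :=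
      aux_char_congr K q h ((aux_mk_eq_iff' K q).mp h1)
    show ((γ (Quotient.out (a + b)) : Circle) : ℂ) = _
    rw [h2, AddChar.map_add_eq_mul]
    rfl

lemma aux_descChar_mk (m : ℕ) (γ : AddChar (RoI K) Circle)
    (h : ∀ x ∈ Hgp K q m, γ x = 1) (x : RoI K) :
    descChar K q m γ h (QuotientAddGroup.mk x) = ((γ x : Circle) : ℂ) := by
  show ((γ (Quotient.out (QuotientAddGroup.mk x)) : Circle) : ℂ) = _
  congr 1
  apply aux_char_congr K q h
  apply (aux_mk_eq_iff' K q).mp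
  rw [QuotientAddGroup.out_eq']

lemma aux_descChar_ne_zero (m : ℕ) (γ : AddChar (RoI K) Circle)
    (h : ∀ x ∈ Hgp K q m, γ x = 1) (hγ : γ ≠ 1) : descChar K q m γ h ≠ 0 := by
  intro h0
  apply hγ
  apply DFunLike.ext
  intro x
  have h1 := congrArg
    (fun ψ : AddChar (RoI K ⧸ Hgp K q m) ℂ => ψ (QuotientAddGroup.mk x)) h0
  simp only [AddChar.zero_apply] at h1
  rw [aux_descChar_mk K q m γ h x] at h1
  rw [AddChar.one_apply]
  apply Subtype.ext
  rw [h1]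
  rfl

lemma aux_descChar_norm (m : ℕ) (γ : AddChar (RoI K) Circle)
    (h : ∀ x ∈ Hgp K q m, γ x = 1) (g : RoI K ⧸ Hgp K q m) :
    ‖descChar K q m γ h g‖ = 1 := by
  show ‖((γ (Quotient.out g) : Circle) : ℂ)‖ = 1
  rw [Circle.norm_coe]

/-! ### Discrepancy facts -/

lemma aux_count_le (X : Finset (RoI K)) (D : Set (RoI K)) :
    Nat.card ↥((X : Set (RoI K)) ∩ D) ≤ X.card := by
  rw [Nat.card_coe_set_eq]
  calc ((X : Set (RoI K)) ∩ D).ncard ≤ (X : Set (RoI K)).ncard :=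
        Set.ncard_le_ncard Set.inter_subset_left X.finite_toSet
    _ = X.card := Set.ncard_coe_finset X

lemma aux_discrepancy_bdd (μ : Measure (RoI K)) [IsProbabilityMeasure μ] (X : Finset (RoI K)) :
    BddAbove (Set.range (fun D : {D : Set (RoI K) // IsDisc K q D} =>
      |(Nat.card ↥((X : Set (RoI K)) ∩ D.1) : ℝ) / (X.card : ℝ) - (μ D.1).toReal|)) := by
  refine ⟨2, ?_⟩
  rintro r ⟨D, rfl⟩
  have h1 : (Nat.card ↥((X : Set (RoI K)) ∩ D.1) : ℝ) / (X.card : ℝ) ≤ 1 := by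
    rcases Nat.eq_zero_or_pos X.card with h | h
    · simp [h]
    · rw [div_le_one (by exact_mod_cast h)]
      exact_mod_cast aux_count_le K X D.1
  have h2 : (μ D.1).toReal ≤ 1 := by
    calc (μ D.1).toReal ≤ (1 : ℝ≥0∞).toReal :=
          ENNReal.toReal_mono ENNReal.one_ne_top prob_le_one
      _ = 1 := ENNReal.toReal_one
  have h3 : (0:ℝ) ≤ (Nat.card ↥((X : Set (RoI K)) ∩ D.1) : ℝ) / (X.card : ℝ) := by positivity
  have h4 : (0:ℝ) ≤ (μ D.1).toReal := ENNReal.toReal_nonneg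
  rw [abs_sub_le_iff]
  constructor <;> linarith

lemma aux_discrepancy_le (μ : Measure (RoI K)) [IsProbabilityMeasure μ] (X : Finset (RoI K))
    (D : Set (RoI K)) (hD : IsDisc K q D) :
    |(Nat.card ↥((X : Set (RoI K)) ∩ D) : ℝ) / (X.card : ℝ) - (μ D).toReal|
      ≤ discrepancy K q μ X :=
  le_ciSup (aux_discrepancy_bdd K q μ X) (⟨D, hD⟩ : {D : Set (RoI K) // IsDisc K q D})

lemma aux_discrepancy_nonneg (μ : Measure (RoI K)) [IsProbabilityMeasure μ]
    (X : Finset (RoI K)) : 0 ≤ discrepancy K q μ X :=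
  le_trans (abs_nonneg _) (aux_discrepancy_le K q μ X (disc K q 0 0) ⟨0, 0, rfl⟩)

/-! ### The Weyl sum bound -/

lemma aux_weyl (hq : 1 < q) (hπ : ‖(π : K)‖ = (q : ℝ)⁻¹)
    (hres : Nat.card (↥(RoI K) ⧸ (Ideal.span {π} : Ideal ↥(RoI K))) = q)
    (μ : Measure (RoI K)) [IsProbabilityMeasure μ] [μ.IsAddHaarMeasure]
    (X : Finset (RoI K)) (hX : X.Nonempty) (m : ℕ) (γ : AddChar (RoI K) Circle) (hγ : γ ≠ 1)
    (htriv : ∀ x ∈ Hgp K q m, γ x = 1) :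
    ‖∑ x ∈ X, ((γ x : Circle) : ℂ)‖
      ≤ (X.card : ℝ) * ((q : ℝ) ^ m * discrepancy K q μ X) := by
  classical
  haveI := aux_finite_quot K q π hq hπ hres m
  haveI : Fintype (RoI K ⧸ Hgp K q m) := Fintype.ofFinite _
  set N : ℝ := (X.card : ℝ) with hNdef
  have hN : (0:ℝ) < N := by
    rw [hNdef]; exact_mod_cast Finset.card_pos.mpr hX
  set Δ : ℝ := discrepancy K q μ X with hΔdef
  have hΔ : 0 ≤ Δ := aux_discrepancy_nonneg K q μ X
  set δ := descChar K q m γ htriv with hδdef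
  set c : (RoI K ⧸ Hgp K q m) → ℕ :=
    fun g => (X.filter (fun x => (QuotientAddGroup.mk x : RoI K ⧸ Hgp K q m) = g)).card with hcdef
  set t : ℝ := (μ ((Hgp K q m : Set (RoI K)))).toReal with htdef
  have hsplit : ∑ x ∈ X, ((γ x : Circle) : ℂ)
      = ∑ g : RoI K ⧸ Hgp K q m, (c g : ℂ) * δ g := by
    rw [← Finset.sum_fiberwise X (fun x => (QuotientAddGroup.mk x : RoI K ⧸ Hgp K q m))
      (fun x => ((γ x : Circle) : ℂ))]
    refine Finset.sum_congr rfl fun g _ => ?_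
    have heq : ∀ x ∈ X.filter (fun x => (QuotientAddGroup.mk x : RoI K ⧸ Hgp K q m) = g),
        ((γ x : Circle) : ℂ) = δ g := by
      intro x hx
      rw [Finset.mem_filter] at hx
      rw [hδdef, ← hx.2, aux_descChar_mk]
    rw [Finset.sum_congr rfl heq, Finset.sum_const, nsmul_eq_mul]
  have hδsum : ∑ g : RoI K ⧸ Hgp K q m, δ g = 0 :=
    AddChar.sum_eq_zero_iff_ne_zero.mpr (aux_descChar_ne_zero K q m γ htriv hγ)
  have hkey : ∑ x ∈ X, ((γ x : Circle) : ℂ)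
      = ∑ g : RoI K ⧸ Hgp K q m, (((c g : ℝ) - N * t : ℝ) : ℂ) * δ g := by
    rw [hsplit, ← sub_eq_zero, ← Finset.sum_sub_distrib]
    have heq : ∀ g ∈ Finset.univ, (c g : ℂ) * δ g - (((c g : ℝ) - N * t : ℝ) : ℂ) * δ g
        = ((N * t : ℝ) : ℂ) * δ g := by
      intro g _
      push_cast
      ring
    rw [Finset.sum_congr rfl heq, ← Finset.mul_sum, hδsum, mul_zero]
  have hterm : ∀ g : RoI K ⧸ Hgp K q m,
      ‖(((c g : ℝ) - N * t : ℝ) : ℂ) * δ g‖ ≤ N * Δ := by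
    intro g
    rw [norm_mul, hδdef, aux_descChar_norm, mul_one, Complex.norm_real]
    have hcount : (c g : ℝ)
        = (Nat.card ↥((X : Set (RoI K)) ∩ disc K q (Quotient.out g) m) : ℝ) := by
      congr 1
      rw [Nat.card_coe_set_eq]
      have hset : ((X : Set (RoI K)) ∩ disc K q (Quotient.out g) m)
          = ↑(X.filter (fun x => (QuotientAddGroup.mk x : RoI K ⧸ Hgp K q m) = g)) := by
        ext x
        simp only [Set.mem_inter_iff, Finset.coe_filter, Set.mem_setOf_eq, Finset.mem_coe]
        constructor
        · rintro ⟨hx, hd⟩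
          refine ⟨hx, ?_⟩
          rw [← QuotientAddGroup.out_eq' g]
          exact (aux_mk_eq_iff K q).mpr hd
        · rintro ⟨hx, hg⟩
          refine ⟨hx, (aux_mk_eq_iff K q).mp ?_⟩
          rw [hg, QuotientAddGroup.out_eq']
      rw [hset, Set.ncard_coe_finset]
    have hdis := aux_discrepancy_le K q μ X (disc K q (Quotient.out g) m)
      ⟨Quotient.out g, m, rfl⟩
    rw [aux_measure_disc K q μ (Quotient.out g) m, ← hcount, ← hΔdef, ← htdef, ← hNdef] at hdis
    have h5 : (c g : ℝ) - N * t = N * ((c g : ℝ) / N - t) := by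
      field_simp
    rw [h5, Real.norm_eq_abs, abs_mul, abs_of_pos hN]
    exact mul_le_mul_of_nonneg_left hdis hN.le
  calc ‖∑ x ∈ X, ((γ x : Circle) : ℂ)‖
      = ‖∑ g : RoI K ⧸ Hgp K q m, (((c g : ℝ) - N * t : ℝ) : ℂ) * δ g‖ := by rw [hkey]
    _ ≤ ∑ g : RoI K ⧸ Hgp K q m, ‖(((c g : ℝ) - N * t : ℝ) : ℂ) * δ g‖ :=
        norm_sum_le _ _
    _ ≤ ∑ _g : RoI K ⧸ Hgp K q m, N * Δ := Finset.sum_le_sum fun g _ => hterm g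
    _ = (Fintype.card (RoI K ⧸ Hgp K q m) : ℝ) * (N * Δ) := by
        rw [Finset.sum_const, Finset.card_univ, nsmul_eq_mul]
    _ ≤ ((q : ℝ) ^ m) * (N * Δ) := by
        apply mul_le_mul_of_nonneg_right _ (by positivity)
        have := aux_card_quot_le K q π hq hπ hres m
        rw [Nat.card_eq_fintype_card] at this
        exact_mod_cast this
    _ = N * ((q : ℝ) ^ m * Δ) := by ring

/-! ### Integrability -/

lemma aux_integrable {E : Type*} [NormedAddCommGroup E] (μ : Measure (RoI K))
    [IsProbabilityMeasure μ] (g : RoI K → E) (hg : Continuous g) : Integrable g μ := by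
  rw [← integrableOn_univ]
  exact ContinuousOn.integrableOn_compact isCompact_univ hg.continuousOn

/-! ### Fourier coefficients via discs -/

lemma aux_fourierCoeff (hq : 1 < q) (hπ : ‖(π : K)‖ = (q : ℝ)⁻¹)
    (μ : Measure (RoI K)) [IsProbabilityMeasure μ] [μ.IsAddHaarMeasure]
    (f : RoI K → ℝ) (hf : Continuous f) (n : ℕ) [Finite (RoI K ⧸ Hgp K q n)]
    [Fintype (RoI K ⧸ Hgp K q n)] (γ' : AddChar (RoI K ⧸ Hgp K q n) ℂ) :
    fourierCoeff K μ (fun x => (f x : ℂ)) (liftChar K q n γ')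
      = ∑ g : RoI K ⧸ Hgp K q n,
          ((∫ y in disc K q (Quotient.out g) n, f y ∂μ : ℝ) : ℂ) * (starRingEnd ℂ) (γ' g) := by
  classical
  set F : RoI K → ℂ :=
    fun x => (f x : ℂ) * (starRingEnd ℂ) ((liftChar K q n γ' x : Circle) : ℂ) with hFdef
  have hcont : Continuous F := by
    apply Continuous.mul
    · exact Complex.continuous_ofReal.comp hf
    · exact continuous_star.comp
        (continuous_subtype_val.comp (aux_continuous_liftChar K q (by omega) n γ'))
  have hint : Integrable F μ := aux_integrable K μ F hcont
  have hmain : ∫ x, F x ∂μ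
      = ∑ g : RoI K ⧸ Hgp K q n, ∫ x in disc K q (Quotient.out g) n, F x ∂μ := by
    rw [← integral_iUnion_fintype (fun g => aux_measurableSet_disc K q _ n)
      (aux_disjoint_disc K q n) (fun g => hint.integrableOn)]
    rw [aux_iUnion_disc K q n, Measure.restrict_univ]
  have hpiece : ∀ g : RoI K ⧸ Hgp K q n,
      ∫ x in disc K q (Quotient.out g) n, F x ∂μ
        = ((∫ y in disc K q (Quotient.out g) n, f y ∂μ : ℝ) : ℂ) * (starRingEnd ℂ) (γ' g) := by
    intro g
    have heq : Set.EqOn F (fun x => (f x : ℂ) * (starRingEnd ℂ) (γ' g))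
        (disc K q (Quotient.out g) n) := by
      intro x hx
      have hmk : (QuotientAddGroup.mk x : RoI K ⧸ Hgp K q n) = g := by
        rw [← QuotientAddGroup.out_eq' g]
        exact (aux_mk_eq_iff K q).mpr hx
      show (f x : ℂ) * (starRingEnd ℂ) ((liftChar K q n γ' x : Circle) : ℂ) = _
      rw [aux_liftChar_coe, hmk]
    rw [setIntegral_congr_fun (aux_measurableSet_disc K q _ n) heq]
    rw [integral_mul_const]
    congr 1
    exact integral_ofReal
  rw [show fourierCoeff K μ (fun x => (f x : ℂ)) (liftChar K q n γ') = ∫ x, F x ∂μ from rfl]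
  rw [hmain]
  exact Finset.sum_congr rfl fun g _ => hpiece g

/-! ### Fourier inversion at level n -/

lemma aux_inversion (hq : 1 < q) (hπ : ‖(π : K)‖ = (q : ℝ)⁻¹)
    (μ : Measure (RoI K)) [IsProbabilityMeasure μ] [μ.IsAddHaarMeasure]
    (f : RoI K → ℝ) (hf : Continuous f) (n : ℕ) [Finite (RoI K ⧸ Hgp K q n)]
    [Fintype (RoI K ⧸ Hgp K q n)] (x0 : RoI K) :
    ∑ γ' : AddChar (RoI K ⧸ Hgp K q n) ℂ,
        fourierCoeff K μ (fun x => (f x : ℂ)) (liftChar K q n γ') * γ' (QuotientAddGroup.mk x0)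
      = (Fintype.card (RoI K ⧸ Hgp K q n) : ℂ) * ((∫ y in disc K q x0 n, f y ∂μ : ℝ) : ℂ) := by
  classical
  have h1 : ∀ γ' : AddChar (RoI K ⧸ Hgp K q n) ℂ,
      fourierCoeff K μ (fun x => (f x : ℂ)) (liftChar K q n γ') * γ' (QuotientAddGroup.mk x0)
        = ∑ g : RoI K ⧸ Hgp K q n,
            ((∫ y in disc K q (Quotient.out g) n, f y ∂μ : ℝ) : ℂ)
              * (γ' (QuotientAddGroup.mk x0) * (starRingEnd ℂ) (γ' g)) := by
    intro γ'
    rw [aux_fourierCoeff K q π hq hπ μ f hf n γ', Finset.sum_mul]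
    exact Finset.sum_congr rfl fun g _ => by ring
  rw [Finset.sum_congr rfl fun γ' _ => h1 γ', Finset.sum_comm]
  have h2 : ∀ g : RoI K ⧸ Hgp K q n, ∀ γ' : AddChar (RoI K ⧸ Hgp K q n) ℂ,
      γ' (QuotientAddGroup.mk x0) * (starRingEnd ℂ) (γ' g)
        = γ' (QuotientAddGroup.mk x0 - g) := by
    intro g γ'
    rw [← Complex.inv_eq_conj (γ'.norm_apply g), ← AddChar.map_neg_eq_inv,
      ← AddChar.map_add_eq_mul, sub_eq_add_neg]
  have h3 : ∀ g : RoI K ⧸ Hgp K q n,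
      (∑ γ' : AddChar (RoI K ⧸ Hgp K q n) ℂ,
        ((∫ y in disc K q (Quotient.out g) n, f y ∂μ : ℝ) : ℂ)
          * (γ' (QuotientAddGroup.mk x0) * (starRingEnd ℂ) (γ' g)))
      = ((∫ y in disc K q (Quotient.out g) n, f y ∂μ : ℝ) : ℂ)
          * (if QuotientAddGroup.mk x0 - g = 0 then (Fintype.card (RoI K ⧸ Hgp K q n) : ℂ) else 0) := by
    intro g
    rw [← Finset.mul_sum]
    congr 1
    rw [Finset.sum_congr rfl fun γ' _ => h2 g γ']
    exact AddChar.sum_apply_eq_ite _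
  rw [Finset.sum_congr rfl fun g _ => h3 g]
  simp only [sub_eq_zero, mul_ite, mul_zero]
  rw [Finset.sum_ite_eq Finset.univ (QuotientAddGroup.mk x0)
    (fun g => ((∫ y in disc K q (Quotient.out g) n, f y ∂μ : ℝ) : ℂ)
      * (Fintype.card (RoI K ⧸ Hgp K q n) : ℂ))]
  simp only [Finset.mem_univ, if_true]
  rw [aux_disc_eq_of_mem K q (aux_out_mk K q x0)]
  ring

/-! ### Average over small discs approximates the function -/

lemma aux_avg_close (hq : 1 < q) (hπ : ‖(π : K)‖ = (q : ℝ)⁻¹)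
    (hres : Nat.card (↥(RoI K) ⧸ (Ideal.span {π} : Ideal ↥(RoI K))) = q)
    (μ : Measure (RoI K)) [IsProbabilityMeasure μ] [μ.IsAddHaarMeasure]
    (f : RoI K → ℝ) (hf : Continuous f) (n : ℕ) (x : RoI K) {ε : ℝ}
    (h : ∀ y ∈ disc K q x n, |f y - f x| ≤ ε) :
    |(Nat.card (RoI K ⧸ Hgp K q n) : ℝ) * (∫ y in disc K q x n, f y ∂μ) - f x| ≤ ε := by
  haveI := aux_finite_quot K q π hq hπ hres n
  haveI : Fintype (RoI K ⧸ Hgp K q n) := Fintype.ofFinite _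
  set κ : ℝ := (Nat.card (RoI K ⧸ Hgp K q n) : ℝ) with hκdef
  have hκ0 : 0 ≤ κ := by positivity
  have hreal : κ * (μ ((Hgp K q n : Set (RoI K)))).toReal = 1 := by
    have h2 := congrArg ENNReal.toReal (aux_card_mul_measure K q π hq hπ hres μ n)
    rwa [ENNReal.toReal_mul, ENNReal.toReal_one, ENNReal.toReal_natCast] at h2
  have hμd : (μ (disc K q x n)).toReal = (μ ((Hgp K q n : Set (RoI K)))).toReal := by
    rw [aux_measure_disc K q μ x n]
  have hone : κ * (μ (disc K q x n)).toReal = 1 := by rw [hμd]; exact hreal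
  have hintf : IntegrableOn f (disc K q x n) μ := (aux_integrable K μ f hf).integrableOn
  have hsub : ∫ y in disc K q x n, (f y - f x) ∂μ
      = (∫ y in disc K q x n, f y ∂μ) - (μ (disc K q x n)).toReal * f x := by
    rw [integral_sub hintf (integrableOn_const (measure_lt_top μ _).ne)]
    rw [setIntegral_const, smul_eq_mul, Measure.real]
  have hbound : ‖∫ y in disc K q x n, (f y - f x) ∂μ‖ ≤ ε * (μ (disc K q x n)).toReal := by
    apply norm_setIntegral_le_of_norm_le_const (measure_lt_top μ _)
    · intro y hy
      rw [Real.norm_eq_abs]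
      exact h y hy
  have hrw : κ * (∫ y in disc K q x n, f y ∂μ) - f x
      = κ * ∫ y in disc K q x n, (f y - f x) ∂μ := by
    rw [hsub, mul_sub, ← mul_assoc, hone, one_mul]
  rw [hrw, abs_mul, abs_of_nonneg hκ0]
  calc κ * |∫ y in disc K q x n, (f y - f x) ∂μ|
      ≤ κ * (ε * (μ (disc K q x n)).toReal) := by
        apply mul_le_mul_of_nonneg_left _ hκ0
        rw [← Real.norm_eq_abs]
        exact hbound
    _ = ε * (κ * (μ (disc K q x n)).toReal) := by ring
    _ = ε := by rw [hone, mul_one]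

lemma aux_approx (hq : 1 < q) (f : RoI K → ℝ) (hf : Continuous f) {ε : ℝ} (hε : 0 < ε)
    (x : RoI K) : ∃ m : ℕ, ∀ n, m ≤ n → ∀ y ∈ disc K q x n, |f y - f x| ≤ ε := by
  obtain ⟨δ, hδ0, hδ⟩ := Metric.continuous_iff.mp hf x ε hε
  have hq1 : (q : ℝ)⁻¹ < 1 := by
    rw [inv_lt_one_iff₀]
    right
    exact_mod_cast hq
  obtain ⟨m, hm⟩ := exists_pow_lt_of_lt_one hδ0 hq1
  refine ⟨m, fun n hn y hy => ?_⟩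
  have h1 : ‖(y : K) - (x : K)‖ ≤ (q : ℝ) ^ (-(n : ℤ)) := (aux_mem_disc K q).mp hy
  have h2 : (q : ℝ) ^ (-(n : ℤ)) ≤ ((q : ℝ)⁻¹) ^ m := by
    rw [zpow_neg, zpow_natCast, ← inv_pow]
    exact pow_le_pow_of_le_one (by positivity) hq1.le hn
  have h3 : dist y x < δ := by
    rw [aux_dist_eq K]
    calc ‖(y : K) - (x : K)‖ ≤ (q : ℝ) ^ (-(n : ℤ)) := h1
      _ ≤ ((q : ℝ)⁻¹) ^ m := h2
      _ < δ := hm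
  have h4 := hδ y h3
  rw [Real.dist_eq] at h4
  exact h4.le
end AuxKoksma

set_option maxHeartbeats 1000000 in
theorem fourier_koksma_inequality
    (hq : 1 < q)
    (hπ : ‖(π : K)‖ = (q : ℝ)⁻¹)
    (hunif : ∀ x : RoI K, ‖(x : K)‖ < 1 → ‖(x : K)‖ ≤ ‖(π : K)‖)
    (hres : Nat.card (↥(RoI K) ⧸ (Ideal.span {π} : Ideal ↥(RoI K))) = q)
    (μ : Measure (RoI K)) [IsProbabilityMeasure μ] [μ.IsAddHaarMeasure]
    (f : RoI K → ℝ) (hf : Continuous f)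
    (X : Finset (RoI K)) (hX : X.Nonempty) :
    ENNReal.ofReal |(X.card : ℝ)⁻¹ * ∑ x ∈ X, f x - ∫ x, f x ∂μ| ≤
      VFourier K q π μ f * ENNReal.ofReal (discrepancy K q μ X) := by
  classical
  set Δ : ℝ := discrepancy K q μ X with hΔdef
  have hΔ0 : 0 ≤ Δ := aux_discrepancy_nonneg K q μ X
  by_cases hT : VFourier K q π μ f * ENNReal.ofReal Δ = ⊤
  · rw [hT]; exact le_top
  have hq0 : 0 < q := by omega
  have hN : (0 : ℝ) < (X.card : ℝ) := by exact_mod_cast Finset.card_pos.mpr hX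
  set I : ℕ → RoI K → ℝ := fun n x => ∫ y in disc K q x n, f y ∂μ with hIdef
  set fn : ℕ → RoI K → ℝ :=
    fun n x => (Nat.card (RoI K ⧸ Hgp K q n) : ℝ) * I n x with hfndef
  -- Step 1: the per-level Koksma bound
  have key : ∀ n : ℕ, ENNReal.ofReal |(X.card : ℝ)⁻¹ * ∑ x ∈ X, fn n x - ∫ x, f x ∂μ|
      ≤ VFourier K q π μ f * ENNReal.ofReal Δ := by
    intro n
    haveI := aux_finite_quot K q π hq hπ hres n
    haveI : Fintype (RoI K ⧸ Hgp K q n) := Fintype.ofFinite _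
    set G := RoI K ⧸ Hgp K q n with hGdef
    set fhat : AddChar G ℂ → ℂ :=
      fun γ' => fourierCoeff K μ (fun x => (f x : ℂ)) (liftChar K q n γ') with hfhatdef
    set W : AddChar G ℂ → ℂ :=
      fun γ' => ((X.card : ℂ))⁻¹ * ∑ x ∈ X, γ' (QuotientAddGroup.mk x) with hWdef
    -- total sum identity
    have hsum_all : ∑ γ' : AddChar G ℂ, fhat γ' * W γ'
        = ((X.card : ℂ))⁻¹ * ∑ x ∈ X, (Fintype.card G : ℂ) * ((I n x : ℝ) : ℂ) := by
      have h1 : ∀ γ' : AddChar G ℂ, fhat γ' * W γ'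
          = ((X.card : ℂ))⁻¹ * ∑ x ∈ X, fhat γ' * γ' (QuotientAddGroup.mk x) := by
        intro γ'
        calc fhat γ' * (((X.card : ℂ))⁻¹ * ∑ x ∈ X, γ' (QuotientAddGroup.mk x))
            = ((X.card : ℂ))⁻¹ * (fhat γ' * ∑ x ∈ X, γ' (QuotientAddGroup.mk x)) := by ring
          _ = ((X.card : ℂ))⁻¹ * ∑ x ∈ X, fhat γ' * γ' (QuotientAddGroup.mk x) := by
              rw [Finset.mul_sum]
      rw [Finset.sum_congr rfl fun γ' _ => h1 γ', ← Finset.mul_sum, Finset.sum_comm]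
      congr 1
      refine Finset.sum_congr rfl fun x hx => ?_
      exact aux_inversion K q π hq hπ μ f hf n x
    -- the trivial character term
    have hW0 : W 0 = 1 := by
      rw [hWdef]
      simp only [AddChar.zero_apply, Finset.sum_const, nsmul_eq_mul, mul_one]
      rw [inv_mul_cancel₀]
      exact_mod_cast hN.ne'
    have hf0 : fhat 0 = ((∫ x, f x ∂μ : ℝ) : ℂ) := by
      rw [hfhatdef]
      show ∫ x, (f x : ℂ) * (starRingEnd ℂ) ((liftChar K q n 0 x : Circle) : ℂ) ∂μ = _
      have hone : ∀ x : RoI K, ((liftChar K q n 0 x : Circle) : ℂ) = 1 := fun x => by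
        rw [aux_liftChar_coe, AddChar.zero_apply]
      simp only [hone, map_one, mul_one]
      exact integral_ofReal
    have hzero : fhat 0 * W 0 = ((∫ x, f x ∂μ : ℝ) : ℂ) := by
      rw [hW0, hf0, mul_one]
    -- splitting off the trivial character
    have hsplit : ((((X.card : ℝ))⁻¹ * ∑ x ∈ X, fn n x - ∫ x, f x ∂μ : ℝ) : ℂ)
        = ∑ γ' ∈ Finset.univ.erase (0 : AddChar G ℂ), fhat γ' * W γ' := by
      have h2 : fhat 0 * W 0 + ∑ γ' ∈ Finset.univ.erase (0 : AddChar G ℂ), fhat γ' * W γ'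
          = ∑ γ' : AddChar G ℂ, fhat γ' * W γ' :=
        Finset.add_sum_erase Finset.univ (fun γ' : AddChar G ℂ => fhat γ' * W γ')
          (Finset.mem_univ (0 : AddChar G ℂ))
      have h3 : ((((X.card : ℝ))⁻¹ * ∑ x ∈ X, fn n x : ℝ) : ℂ)
          = ((X.card : ℂ))⁻¹ * ∑ x ∈ X, (Fintype.card G : ℂ) * ((I n x : ℝ) : ℂ) := by
        rw [hfndef]
        push_cast [Nat.card_eq_fintype_card]
        norm_num
        exact Or.inl rfl
      rw [Complex.ofReal_sub, h3, ← hsum_all, ← h2, hzero]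
      ring
    -- term-wise bound
    have hterm : ∀ γ' ∈ Finset.univ.erase (0 : AddChar G ℂ),
        ‖fhat γ' * W γ'‖
          ≤ ‖fhat γ'‖ * ((q : ℝ) ^ (charLevel K π (liftChar K q n γ')) * Δ) := by
      intro γ' hγ'
      have hγ'0 : γ' ≠ 0 := Finset.ne_of_mem_erase hγ'
      have hγne : liftChar K q n γ' ≠ 1 := aux_liftChar_ne_one K q n hγ'0
      have hlev : ∀ y, liftChar K q n γ' (π ^ n * y) = 1 :=
        aux_liftChar_level K q π hq0 hπ n γ'
      have htriv : ∀ x ∈ Hgp K q (charLevel K π (liftChar K q n γ')),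
          liftChar K q n γ' x = 1 :=
        aux_trivial_on_Hgp K q π hq0 hπ (aux_charLevel_spec K π hlev)
      have hweyl := aux_weyl K q π hq hπ hres μ X hX
        (charLevel K π (liftChar K q n γ')) (liftChar K q n γ') hγne htriv
      have hWb : ‖W γ'‖ ≤ (q : ℝ) ^ (charLevel K π (liftChar K q n γ')) * Δ := by
        rw [hWdef]
        have hcoe : ∀ x : RoI K,
            γ' (QuotientAddGroup.mk x) = ((liftChar K q n γ' x : Circle) : ℂ) :=
          fun x => (aux_liftChar_coe K q n γ' x).symm
        simp only
        rw [Finset.sum_congr rfl fun x _ => hcoe x, norm_mul, norm_inv]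
        have hnc : ‖((X.card : ℕ) : ℂ)‖ = (X.card : ℝ) := by
          rw [Complex.norm_natCast]
        rw [hnc]
        calc ((X.card : ℝ))⁻¹ * ‖∑ x ∈ X, ((liftChar K q n γ' x : Circle) : ℂ)‖
            ≤ ((X.card : ℝ))⁻¹ * ((X.card : ℝ)
                * ((q : ℝ) ^ (charLevel K π (liftChar K q n γ')) * Δ)) :=
              mul_le_mul_of_nonneg_left hweyl (by positivity)
          _ = (q : ℝ) ^ (charLevel K π (liftChar K q n γ')) * Δ := by
              field_simp
      rw [norm_mul]
      exact mul_le_mul_of_nonneg_left hWb (norm_nonneg _)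
    -- real bound
    have hreal : |(X.card : ℝ)⁻¹ * ∑ x ∈ X, fn n x - ∫ x, f x ∂μ|
        ≤ ∑ γ' ∈ Finset.univ.erase (0 : AddChar G ℂ),
            ‖fhat γ'‖ * ((q : ℝ) ^ (charLevel K π (liftChar K q n γ')) * Δ) := by
      calc |(X.card : ℝ)⁻¹ * ∑ x ∈ X, fn n x - ∫ x, f x ∂μ|
          = ‖((((X.card : ℝ))⁻¹ * ∑ x ∈ X, fn n x - ∫ x, f x ∂μ : ℝ) : ℂ)‖ := by
            rw [Complex.norm_real, Real.norm_eq_abs]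
        _ = ‖∑ γ' ∈ Finset.univ.erase (0 : AddChar G ℂ), fhat γ' * W γ'‖ := by rw [hsplit]
        _ ≤ ∑ γ' ∈ Finset.univ.erase (0 : AddChar G ℂ), ‖fhat γ' * W γ'‖ := norm_sum_le _ _
        _ ≤ _ := Finset.sum_le_sum hterm
    -- pass to ℝ≥0∞
    have hsubsum : (∑ γ' ∈ Finset.univ.erase (0 : AddChar G ℂ),
        ENNReal.ofReal ((q : ℝ) ^ (charLevel K π (liftChar K q n γ')) * ‖fhat γ'‖))
        ≤ VFourier K q π μ f := by
      rw [VFourier]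
      have hmem : ∀ γ' : AddChar G ℂ, γ' ∈ Finset.univ.erase (0 : AddChar G ℂ) ↔ γ' ≠ 0 := by
        simp
      rw [Finset.sum_subtype _ hmem (fun γ' =>
        ENNReal.ofReal ((q : ℝ) ^ (charLevel K π (liftChar K q n γ')) * ‖fhat γ'‖))]
      set F : {γ : AddChar (RoI K) Circle // Continuous ⇑γ ∧ γ ≠ 1} → ℝ≥0∞ :=
        fun γs => ENNReal.ofReal ((q : ℝ) ^ charLevel K π γs.1
          * ‖fourierCoeff K μ (fun x => (f x : ℂ)) γs.1‖) with hFdef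
      set e : {γ' : AddChar G ℂ // γ' ≠ 0}
          → {γ : AddChar (RoI K) Circle // Continuous ⇑γ ∧ γ ≠ 1} :=
        fun γ'' => ⟨liftChar K q n γ''.1,
          aux_continuous_liftChar K q hq0 n _, aux_liftChar_ne_one K q n γ''.2⟩ with hedef
      have he : Function.Injective e := by
        intro a b hab
        apply Subtype.ext
        exact aux_liftChar_inj K q n (congrArg Subtype.val hab)
      calc ∑ γ'' : {γ' : AddChar G ℂ // γ' ≠ 0},
            ENNReal.ofReal ((q : ℝ) ^ (charLevel K π (liftChar K q n γ''.1)) * ‖fhat γ''.1‖)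
          = ∑' γ'' : {γ' : AddChar G ℂ // γ' ≠ 0}, F (e γ'') := (tsum_fintype _).symm
        _ ≤ ∑' γs : {γ : AddChar (RoI K) Circle // Continuous ⇑γ ∧ γ ≠ 1}, F γs :=
            ENNReal.tsum_comp_le_tsum_of_injective he F
    calc ENNReal.ofReal |(X.card : ℝ)⁻¹ * ∑ x ∈ X, fn n x - ∫ x, f x ∂μ|
        ≤ ENNReal.ofReal (∑ γ' ∈ Finset.univ.erase (0 : AddChar G ℂ),
            ‖fhat γ'‖ * ((q : ℝ) ^ (charLevel K π (liftChar K q n γ')) * Δ)) :=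
          ENNReal.ofReal_le_ofReal hreal
      _ = ∑ γ' ∈ Finset.univ.erase (0 : AddChar G ℂ),
            ENNReal.ofReal (‖fhat γ'‖ * ((q : ℝ) ^ (charLevel K π (liftChar K q n γ')) * Δ)) := by
          rw [ENNReal.ofReal_sum_of_nonneg]
          intro γ' _
          positivity
      _ = ∑ γ' ∈ Finset.univ.erase (0 : AddChar G ℂ),
            ENNReal.ofReal ((q : ℝ) ^ (charLevel K π (liftChar K q n γ')) * ‖fhat γ'‖)
              * ENNReal.ofReal Δ := by
          refine Finset.sum_congr rfl fun γ' _ => ?_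
          rw [← ENNReal.ofReal_mul (by positivity)]
          congr 1
          ring
      _ = (∑ γ' ∈ Finset.univ.erase (0 : AddChar G ℂ),
            ENNReal.ofReal ((q : ℝ) ^ (charLevel K π (liftChar K q n γ')) * ‖fhat γ'‖))
              * ENNReal.ofReal Δ := by
          rw [Finset.sum_mul]
      _ ≤ VFourier K q π μ f * ENNReal.ofReal Δ :=
          mul_le_mul_left hsubsum _
  -- Step 2: approximation as n → ∞
  have happrox : ∀ ε : ℝ, 0 < ε →
      |(X.card : ℝ)⁻¹ * ∑ x ∈ X, f x - ∫ x, f x ∂μ|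
        ≤ (VFourier K q π μ f * ENNReal.ofReal Δ).toReal + ε := by
    intro ε hε
    choose m hm using fun x : RoI K => aux_approx K q hq f hf hε x
    set n := X.sup m with hndef
    have hclose : ∀ x ∈ X, |fn n x - f x| ≤ ε := by
      intro x hx
      exact aux_avg_close K q π hq hπ hres μ f hf n x (hm x n (Finset.le_sup hx))
    have hmean : |(X.card : ℝ)⁻¹ * ∑ x ∈ X, f x - (X.card : ℝ)⁻¹ * ∑ x ∈ X, fn n x| ≤ ε := by
      rw [← mul_sub, ← Finset.sum_sub_distrib, abs_mul, abs_of_pos (inv_pos.mpr hN)]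
      calc (X.card : ℝ)⁻¹ * |∑ x ∈ X, (f x - fn n x)|
          ≤ (X.card : ℝ)⁻¹ * ∑ x ∈ X, |f x - fn n x| :=
            mul_le_mul_of_nonneg_left (Finset.abs_sum_le_sum_abs _ _) (by positivity)
        _ ≤ (X.card : ℝ)⁻¹ * ∑ _x ∈ X, ε := by
            apply mul_le_mul_of_nonneg_left _ (by positivity)
            refine Finset.sum_le_sum fun x hx => ?_
            rw [abs_sub_comm]
            exact hclose x hx
        _ = ε := by
            rw [Finset.sum_const, nsmul_eq_mul]
            field_simp
    have hkeyn : |(X.card : ℝ)⁻¹ * ∑ x ∈ X, fn n x - ∫ x, f x ∂μ|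
        ≤ (VFourier K q π μ f * ENNReal.ofReal Δ).toReal :=
      (ENNReal.ofReal_le_iff_le_toReal hT).mp (key n)
    calc |(X.card : ℝ)⁻¹ * ∑ x ∈ X, f x - ∫ x, f x ∂μ|
        ≤ |(X.card : ℝ)⁻¹ * ∑ x ∈ X, f x - (X.card : ℝ)⁻¹ * ∑ x ∈ X, fn n x|
            + |(X.card : ℝ)⁻¹ * ∑ x ∈ X, fn n x - ∫ x, f x ∂μ| := abs_sub_le _ _ _
      _ ≤ ε + (VFourier K q π μ f * ENNReal.ofReal Δ).toReal := add_le_add hmean hkeyn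
      _ = (VFourier K q π μ f * ENNReal.ofReal Δ).toReal + ε := by ring
  have hfinal : |(X.card : ℝ)⁻¹ * ∑ x ∈ X, f x - ∫ x, f x ∂μ|
      ≤ (VFourier K q π μ f * ENNReal.ofReal Δ).toReal :=
    le_of_forall_pos_le_add happrox
  calc ENNReal.ofReal |(X.card : ℝ)⁻¹ * ∑ x ∈ X, f x - ∫ x, f x ∂μ|
      ≤ ENNReal.ofReal ((VFourier K q π μ f * ENNReal.ofReal Δ).toReal) :=
        ENNReal.ofReal_le_ofReal hfinal
    _ ≤ VFourier K q π μ f * ENNReal.ofReal Δ := ENNReal.ofReal_toReal_le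
end NAKoksma
end
end

section
/- There exists a continuous function f : O → ℝ whose Taibleson variation is infinite: V_Taib(f) = +∞. (Hence the converse of the regularity property of finite Taibleson variation fails.) -/
open MeasureTheory Set Filter Topology
open scoped ENNReal NNReal

noncomputable section

namespace NAKoksma

variable (K : Type*) [NontriviallyNormedField K] [IsUltrametricDist K]

variable (q : ℕ)

variable [MeasurableSpace K]

variable (π : RoI K)

variable [LocallyCompactSpace K] [BorelSpace K]

set_option linter.unusedVariables false
set_option linter.unusedSectionVars false

private lemma qR_pos (hq : 1 < q) : (0:ℝ) < (q:ℝ) := by exact_mod_cast Nat.zero_lt_of_lt hq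

private lemma rq_pos (hq : 1 < q) (n : ℕ) : (0:ℝ) < (q:ℝ) ^ (-(n:ℤ)) :=
  zpow_pos (qR_pos q hq) _

private lemma rq_le_one (hq : 1 < q) (n : ℕ) : (q:ℝ) ^ (-(n:ℤ)) ≤ 1 :=
  zpow_le_one_of_nonpos₀ (by exact_mod_cast hq.le) (by omega)

private lemma rq_succ (hq : 1 < q) (n : ℕ) :
    (q:ℝ) ^ (-((n+1:ℕ):ℤ)) = (q:ℝ) ^ (-(n:ℤ)) * (q:ℝ)⁻¹ := by
  rw [← zpow_neg_one, ← zpow_add₀ (ne_of_gt (qR_pos q hq))]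
  congr 1; push_cast; ring

private lemma coe_norm_pi_pow (hq : 1 < q) (hπ : ‖(π:K)‖ = (q:ℝ)⁻¹) (n : ℕ) :
    ‖(((π:RoI K) ^ n : RoI K) : K)‖ = (q:ℝ) ^ (-(n:ℤ)) := by
  push_cast
  rw [norm_pow, hπ, inv_pow, ← zpow_natCast (q:ℝ) n, ← zpow_neg]

private lemma pi_ne_zero (hq : 1 < q) (hπ : ‖(π:K)‖ = (q:ℝ)⁻¹) : (π:K) ≠ 0 := by
  intro h
  rw [h, norm_zero] at hπ
  exact absurd hπ.symm (ne_of_gt (by positivity))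

private lemma exists_div_pow (hq : 1 < q) (hπ : ‖(π:K)‖ = (q:ℝ)⁻¹) :
    ∀ (n : ℕ) (y : RoI K), ‖(y:K)‖ ≤ (q:ℝ) ^ (-(n:ℤ)) → ∃ z : RoI K, y = π ^ n * z := by
  intro n
  induction n with
  | zero => intro y hy; exact ⟨y, by simp⟩
  | succ n ih =>
    intro y hy
    have hπ0 : (π:K) ≠ 0 := pi_ne_zero K q π hq hπ
    have hzmem : ‖(y:K) / (π:K)‖ ≤ (q:ℝ) ^ (-(n:ℤ)) := by
      rw [norm_div, hπ, div_eq_mul_inv, inv_inv]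
      calc ‖(y:K)‖ * q ≤ (q:ℝ) ^ (-((n+1:ℕ):ℤ)) * q := by
            exact mul_le_mul_of_nonneg_right hy (qR_pos q hq).le
        _ = (q:ℝ) ^ (-(n:ℤ)) := by
            rw [rq_succ q hq n, mul_assoc, inv_mul_cancel₀ (ne_of_gt (qR_pos q hq)), mul_one]
    have hz1 : ‖(y:K) / (π:K)‖ ≤ 1 := le_trans hzmem (rq_le_one q hq n)
    obtain ⟨z, hz⟩ := ih ⟨(y:K)/(π:K), hz1⟩ hzmem
    refine ⟨z, ?_⟩
    have : ((y:K)/(π:K)) = (((π:RoI K)^n : RoI K) : K) * (z : K) := by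
      have := congrArg Subtype.val hz
      push_cast at this
      exact this
    apply Subtype.ext
    push_cast
    push_cast at this
    rw [pow_succ']
    field_simp at this ⊢
    linear_combination this

private lemma mem_span_iff (hq : 1 < q) (hπ : ‖(π:K)‖ = (q:ℝ)⁻¹) (x : RoI K) :
    x ∈ Ideal.span {π} ↔ ‖(x:K)‖ ≤ (q:ℝ)⁻¹ := by
  rw [Ideal.mem_span_singleton']
  constructor
  · rintro ⟨a, rfl⟩
    push_cast
    rw [norm_mul, hπ]
    calc ‖(a:K)‖ * (q:ℝ)⁻¹ ≤ 1 * (q:ℝ)⁻¹ :=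
          mul_le_mul_of_nonneg_right a.2 (by positivity)
      _ = (q:ℝ)⁻¹ := one_mul _
  · intro hx
    have := exists_div_pow K q π hq hπ 1 x (by simpa using hx)
    obtain ⟨z, hz⟩ := this
    exact ⟨z, by rw [hz]; ring⟩

private lemma exists_reps (hq : 1 < q) (hπ : ‖(π:K)‖ = (q:ℝ)⁻¹)
    (hres : Nat.card (↥(RoI K) ⧸ (Ideal.span {π} : Ideal ↥(RoI K))) = q) :
    ∃ R : Finset (RoI K), R.card = q ∧ (0:RoI K) ∈ R ∧
      (∀ r ∈ R, ∀ s ∈ R, ‖(r:K) - (s:K)‖ ≤ (q:ℝ)⁻¹ → r = s) ∧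
      (∀ x : RoI K, ∃ r ∈ R, ‖(x:K) - (r:K)‖ ≤ (q:ℝ)⁻¹) := by
  set I : Ideal (RoI K) := Ideal.span {π} with hI
  have hfin : Finite (RoI K ⧸ I) := by
    have : Nat.card (RoI K ⧸ I) ≠ 0 := by rw [hres]; omega
    exact (Nat.card_ne_zero.mp this).2
  haveI := Fintype.ofFinite (RoI K ⧸ I)
  classical
  set sec : (RoI K ⧸ I) → RoI K := fun t =>
    if t = 0 then 0 else Function.surjInv Ideal.Quotient.mk_surjective t with hsecdef
  have hsec : ∀ t, Ideal.Quotient.mk I (sec t) = t := by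
    intro t
    by_cases h : t = 0
    · simp [hsecdef, h]
    · simp only [hsecdef, if_neg h]
      exact Function.surjInv_eq Ideal.Quotient.mk_surjective t
  have hsecinj : Function.Injective sec := Function.LeftInverse.injective hsec
  refine ⟨Finset.image sec Finset.univ, ?_, ?_, ?_, ?_⟩
  · rw [Finset.card_image_of_injective _ hsecinj, Finset.card_univ,
      ← Nat.card_eq_fintype_card, hres]
  · refine Finset.mem_image.mpr ⟨0, Finset.mem_univ _, by simp [hsecdef]⟩
  · intro r hr s hs hle
    obtain ⟨t, _, rfl⟩ := Finset.mem_image.mp hr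
    obtain ⟨u, _, rfl⟩ := Finset.mem_image.mp hs
    have hmem : sec t - sec u ∈ I := by
      rw [hI, mem_span_iff K q π hq hπ]
      push_cast
      exact hle
    have : Ideal.Quotient.mk I (sec t) = Ideal.Quotient.mk I (sec u) :=
      Ideal.Quotient.eq.mpr hmem
    rw [hsec, hsec] at this
    rw [this]
  · intro x
    refine ⟨sec (Ideal.Quotient.mk I x), Finset.mem_image.mpr ⟨_, Finset.mem_univ _, rfl⟩, ?_⟩
    have hmem : x - sec (Ideal.Quotient.mk I x) ∈ I := by
      rw [← Ideal.Quotient.eq, hsec]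
    have h2 := (mem_span_iff K q π hq hπ _).mp hmem
    push_cast at h2
    exact h2

open scoped Classical in
private def centers (R : Finset (RoI K)) : ℕ → Finset (RoI K)
  | 0 => {0}
  | n+1 => ((centers R n) ×ˢ R).image fun p => p.1 + p.2 * π ^ n

private lemma norm_sub_le_max' (a b : K) : ‖a - b‖ ≤ max ‖a‖ ‖b‖ := by
  rw [sub_eq_add_neg]
  refine (IsUltrametricDist.norm_add_le_max a (-b)).trans ?_
  simp

section CentProps

variable (R : Finset (RoI K))

private lemma centers_sep (hq : 1 < q) (hπ : ‖(π:K)‖ = (q:ℝ)⁻¹)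
    (hRsep : ∀ r ∈ R, ∀ s ∈ R, ‖(r:K) - (s:K)‖ ≤ (q:ℝ)⁻¹ → r = s) :
    ∀ n, ∀ c ∈ centers K π R n, ∀ c' ∈ centers K π R n,
      ‖(c:K) - (c':K)‖ ≤ (q:ℝ) ^ (-(n:ℤ)) → c = c' := by
  intro n
  induction n with
  | zero => intro c hc c' hc' _; simp only [centers, Finset.mem_singleton] at hc hc'; rw [hc, hc']
  | succ n ih =>
    intro c hc c' hc' hle
    simp only [centers, Finset.mem_image, Finset.mem_product] at hc hc'
    obtain ⟨⟨a, e⟩, ⟨ha, he⟩, rfl⟩ := hc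
    obtain ⟨⟨a', e'⟩, ⟨ha', he'⟩, rfl⟩ := hc'
    have happrox : ‖((e:K) - e') * (π:K) ^ n‖ ≤ (q:ℝ) ^ (-(n:ℤ)) := by
      rw [norm_mul]
      have h1 : ‖(e:K) - e'‖ ≤ 1 := by
        refine (norm_sub_le_max' K _ _).trans (max_le e.2 e'.2)
      have h2 : ‖(π:K) ^ n‖ = (q:ℝ) ^ (-(n:ℤ)) := by
        have := coe_norm_pi_pow K q π hq hπ n; push_cast at this; exact this
      rw [h2]
      calc ‖(e:K) - e'‖ * (q:ℝ) ^ (-(n:ℤ)) ≤ 1 * (q:ℝ) ^ (-(n:ℤ)) :=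
        mul_le_mul_of_nonneg_right h1 (rq_pos q hq n).le
        _ = _ := one_mul _
    have hsum : ((a + e * π ^ n : RoI K) : K) - ((a' + e' * π ^ n : RoI K) : K)
        = ((a:K) - a') + ((e:K) - e') * (π:K)^n := by push_cast; ring
    have haa' : ‖(a:K) - a'‖ ≤ (q:ℝ) ^ (-(n:ℤ)) := by
      have : (a:K) - a' = (((a + e * π ^ n : RoI K) : K) - ((a' + e' * π ^ n : RoI K) : K))
          - ((e:K) - e') * (π:K)^n := by rw [hsum]; ring
      rw [this]
      refine (norm_sub_le_max' K _ _).trans (max_le ?_ happrox)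
      refine hle.trans ?_
      rw [rq_succ q hq n]
      calc (q:ℝ) ^ (-(n:ℤ)) * (q:ℝ)⁻¹ ≤ (q:ℝ) ^ (-(n:ℤ)) * 1 := by
            refine mul_le_mul_of_nonneg_left ?_ (rq_pos q hq n).le
            rw [inv_le_one_iff₀]; right; exact_mod_cast hq.le
        _ = _ := mul_one _
    have hac : a = a' := ih a ha a' ha' haa'
    subst hac
    have hee : e = e' := by
      have hdiff : ‖((e:K) - e') * (π:K) ^ n‖ ≤ (q:ℝ) ^ (-((n+1:ℕ):ℤ)) := by
        have : ((e:K) - e') * (π:K)^n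
            = (((a + e * π ^ n : RoI K) : K) - ((a + e' * π ^ n : RoI K) : K)) := by
          push_cast; ring
        rw [this]
        exact hle
      rw [norm_mul] at hdiff
      have h2 : ‖(π:K) ^ n‖ = (q:ℝ) ^ (-(n:ℤ)) := by
        have := coe_norm_pi_pow K q π hq hπ n; push_cast at this; exact this
      rw [h2, rq_succ q hq n] at hdiff
      have : ‖(e:K) - e'‖ ≤ (q:ℝ)⁻¹ := by
        have hpos := rq_pos q hq n
        nlinarith [norm_nonneg ((e:K) - e')]
      exact hRsep e he e' he' this
    rw [hee]


private lemma centers_cover (hq : 1 < q) (hπ : ‖(π:K)‖ = (q:ℝ)⁻¹)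
    (hRcov : ∀ x : RoI K, ∃ r ∈ R, ‖(x:K) - (r:K)‖ ≤ (q:ℝ)⁻¹) :
    ∀ n, ∀ x : RoI K, ∃ c ∈ centers K π R n, ‖(x:K) - (c:K)‖ ≤ (q:ℝ) ^ (-(n:ℤ)) := by
  intro n
  induction n with
  | zero =>
    intro x
    refine ⟨0, by simp [centers], ?_⟩
    have h0 : ((0:RoI K):K) = 0 := rfl
    rw [h0, sub_zero]
    have hx1 : ‖(x:K)‖ ≤ 1 := x.2
    simpa using hx1
  | succ n ih =>
    intro x
    obtain ⟨c, hc, hxc⟩ := ih x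
    obtain ⟨z, hz⟩ := exists_div_pow K q π hq hπ n (x - c) (by push_cast; exact hxc)
    obtain ⟨e, he, hze⟩ := hRcov z
    refine ⟨c + e * π ^ n, ?_, ?_⟩
    · simp only [centers, Finset.mem_image, Finset.mem_product]
      exact ⟨(c, e), ⟨hc, he⟩, rfl⟩
    · have hdiff : (x:K) - ((c + e * π ^ n : RoI K) : K) = ((z:K) - e) * (π:K)^n := by
        have := congrArg Subtype.val hz
        push_cast at this ⊢
        rw [sub_eq_iff_eq_add] at this
        rw [this]; ring
      rw [hdiff, norm_mul]
      have h2 : ‖(π:K) ^ n‖ = (q:ℝ) ^ (-(n:ℤ)) := by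
        have := coe_norm_pi_pow K q π hq hπ n; push_cast at this; exact this
      rw [h2, rq_succ q hq n, mul_comm ((q:ℝ) ^ (-(n:ℤ)))]
      exact mul_le_mul_of_nonneg_right hze (rq_pos q hq n).le

private lemma centers_card (hq : 1 < q) (hπ : ‖(π:K)‖ = (q:ℝ)⁻¹)
    (hRsep : ∀ r ∈ R, ∀ s ∈ R, ‖(r:K) - (s:K)‖ ≤ (q:ℝ)⁻¹ → r = s)
    (hRcard : R.card = q) :
    ∀ n, (centers K π R n).card = q ^ n := by
  intro n
  induction n with
  | zero => simp [centers]
  | succ n ih =>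
    classical
    have hinj : ∀ p ∈ (centers K π R n) ×ˢ R, ∀ p' ∈ (centers K π R n) ×ˢ R,
        (fun p : RoI K × RoI K => p.1 + p.2 * π ^ n) p
          = (fun p : RoI K × RoI K => p.1 + p.2 * π ^ n) p' → p = p' := by
      rintro ⟨a, e⟩ hae ⟨a', e'⟩ hae' heq
      rw [Finset.mem_product] at hae hae'
      simp only at heq
      have hkey : (a:K) - a' = ((e':K) - e) * (π:K)^n := by
        have hv := congrArg Subtype.val heq
        push_cast at hv
        linear_combination hv
      have hπn : ‖(π:K) ^ n‖ = (q:ℝ) ^ (-(n:ℤ)) := by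
        have := coe_norm_pi_pow K q π hq hπ n; push_cast at this; exact this
      have ha : a = a' := by
        refine centers_sep K q π R hq hπ hRsep n a hae.1 a' hae'.1 ?_
        rw [hkey, norm_mul, hπn]
        have h1' : ‖(e':K) - e‖ ≤ 1 := (norm_sub_le_max' K _ _).trans (max_le e'.2 e.2)
        calc ‖(e':K) - e‖ * (q:ℝ) ^ (-(n:ℤ)) ≤ 1 * (q:ℝ) ^ (-(n:ℤ)) :=
          mul_le_mul_of_nonneg_right h1' (rq_pos q hq n).le
          _ = _ := one_mul _
      subst ha
      have hmul : ((e':K) - e) * (π:K)^n = 0 := by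
        rw [← hkey]; simp
      have he : e' = e := by
        rcases mul_eq_zero.mp hmul with h | h
        · exact Subtype.ext (sub_eq_zero.mp h)
        · exact absurd h (pow_ne_zero n (pi_ne_zero K q π hq hπ))
      rw [he]
    have : (centers K π R (n+1)).card = ((centers K π R n) ×ˢ R).card := by
      simp only [centers]
      exact Finset.card_image_of_injOn fun p hp p' hp' h =>
        hinj p (Finset.mem_coe.mp hp) p' (Finset.mem_coe.mp hp') h
    rw [this, Finset.card_product, ih, hRcard, pow_succ]

private lemma centers_step (n : ℕ) {c e : RoI K} (hc : c ∈ centers K π R n) (he : e ∈ R) :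
    c + e * π ^ n ∈ centers K π R (n+1) := by
  classical
  simp only [centers, Finset.mem_image, Finset.mem_product]
  exact ⟨(c, e), ⟨hc, he⟩, rfl⟩

private lemma centers_mono (hR0 : (0:RoI K) ∈ R) {n m : ℕ} (hnm : n ≤ m) :
    centers K π R n ⊆ centers K π R m := by
  induction hnm with
  | refl => exact fun x hx => hx
  | step h ih =>
    refine ih.trans fun c hc => ?_
    have := centers_step K π R _ hc hR0
    simpa using this

end CentProps

private lemma rq_anti (hq : 1 < q) {k n : ℕ} (h : k ≤ n) :
    (q:ℝ) ^ (-(n:ℤ)) ≤ (q:ℝ) ^ (-(k:ℤ)) := by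
  refine zpow_le_zpow_right₀ (by exact_mod_cast hq.le) ?_
  omega

private lemma mem_disc_iff (a x : RoI K) (n : ℕ) :
    x ∈ disc K q a n ↔ ‖(x:K) - (a:K)‖ ≤ (q:ℝ) ^ (-(n:ℤ)) := Iff.rfl

private lemma self_mem_disc (hq : 1 < q) (a : RoI K) (n : ℕ) : a ∈ disc K q a n := by
  rw [mem_disc_iff]
  simp [(rq_pos q hq n).le]

private lemma disc_clopen (hq : 1 < q) (a : RoI K) (n : ℕ) : IsClopen (disc K q a n) := by
  have heq : disc K q a n
      = (fun x : RoI K => (x:K)) ⁻¹' (Metric.closedBall (a:K) ((q:ℝ) ^ (-(n:ℤ)))) := by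
    ext x
    simp [disc, Metric.mem_closedBall, dist_eq_norm]
  rw [heq]
  have hcont : Continuous fun x : RoI K => (x:K) := continuous_subtype_val
  exact ⟨(Metric.isClosed_closedBall).preimage hcont,
    (IsUltrametricDist.isOpen_closedBall (a:K) (ne_of_gt (rq_pos q hq n))).preimage hcont⟩

theorem exists_continuous_with_infinite_VTaib
    (hq : 1 < q)
    (hπ : ‖(π : K)‖ = (q : ℝ)⁻¹)
    (hunif : ∀ x : RoI K, ‖(x : K)‖ < 1 → ‖(x : K)‖ ≤ ‖(π : K)‖)
    (hres : Nat.card (↥(RoI K) ⧸ (Ideal.span {π} : Ideal ↥(RoI K))) = q) :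
    ∃ f : RoI K → ℝ, Continuous f ∧ VTaib K q f = ⊤ := by
  classical
  obtain ⟨R, hRcard, hR0, hRsep, hRcov⟩ := exists_reps K q π hq hπ hres
  obtain ⟨s1, hs1R, hs1ne⟩ : ∃ s ∈ R, s ≠ (0:RoI K) :=
    Finset.exists_mem_ne (by rw [hRcard]; exact hq) 0
  have hs1norm : (q:ℝ)⁻¹ < ‖(s1:K)‖ := by
    by_contra hcon
    push_neg at hcon
    refine hs1ne (hRsep s1 hs1R 0 hR0 ?_)
    simpa using hcon
  set C : ℕ → Finset (RoI K) := centers K π R with hC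
  set T : ℕ → Set (RoI K) := fun n => ⋃ c ∈ C n, disc K q c (n+1) with hT
  set g : ℕ → RoI K → ℝ := fun n x => if x ∈ T n then 0 else (2/3:ℝ)^n with hg
  set f : RoI K → ℝ := fun x => ∑' n, g n x with hf
  have hπn : ∀ n : ℕ, ‖(π:K) ^ n‖ = (q:ℝ) ^ (-(n:ℤ)) := by
    intro n
    have := coe_norm_pi_pow K q π hq hπ n; push_cast at this; exact this
  have hgbound : ∀ n x, ‖g n x‖ ≤ (2/3:ℝ)^n := by
    intro n x
    rw [hg]
    dsimp only
    split
    · simp; positivity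
    · rw [Real.norm_eq_abs, abs_of_nonneg (by positivity)]
  have hsum23 : Summable fun n : ℕ => (2/3:ℝ)^n :=
    summable_geometric_of_lt_one (by norm_num) (by norm_num)
  have hgsummable : ∀ x, Summable fun n => g n x := fun x =>
    Summable.of_norm_bounded hsum23 (fun n => hgbound n x)
  have hTclopen : ∀ n, IsClopen (T n) := by
    intro n
    rw [hT]
    exact Set.Finite.isClopen_biUnion (C n).finite_toSet
      (fun c _ => disc_clopen K q hq c (n+1))
  have hgcont : ∀ n, Continuous (g n) := by
    intro n
    refine Continuous.if ?_ continuous_const continuous_const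
    intro a ha
    rw [Set.setOf_mem_eq, (hTclopen n).frontier_eq] at ha
    exact absurd ha (Set.notMem_empty a)
  have hfcont : Continuous f := continuous_tsum hgcont hsum23 hgbound
  refine ⟨f, hfcont, ?_⟩
  -- membership facts
  have hmemT : ∀ (n : ℕ) (x : RoI K), x ∈ T n ↔ ∃ c ∈ C n, ‖(x:K) - c‖ ≤ (q:ℝ)^(-((n+1:ℕ):ℤ)) := by
    intro n x
    rw [hT]
    simp only [Set.mem_iUnion, mem_disc_iff, exists_prop]
  -- the oscillation identity
  have hosc : ∀ (n : ℕ), ∀ c ∈ C n, f (c + s1 * π ^ n) - f c = (2/3:ℝ)^n := by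
    intro n c hc
    set x0 : RoI K := c + s1 * π ^ n with hx0def
    have hx0c : (x0:K) - c = (s1:K) * (π:K)^n := by rw [hx0def]; push_cast; ring
    have hx0norm : ‖(x0:K) - c‖ = ‖(s1:K)‖ * (q:ℝ)^(-(n:ℤ)) := by
      rw [hx0c, norm_mul, hπn n]
    have hx0small : ‖(x0:K) - c‖ ≤ (q:ℝ)^(-(n:ℤ)) := by
      rw [hx0norm]
      calc ‖(s1:K)‖ * (q:ℝ)^(-(n:ℤ)) ≤ 1 * (q:ℝ)^(-(n:ℤ)) :=
        mul_le_mul_of_nonneg_right s1.2 (rq_pos q hq n).le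
        _ = _ := one_mul _
    have hx0T : x0 ∉ T n := by
      intro hmem
      obtain ⟨c', hc', hxc'⟩ := (hmemT n x0).mp hmem
      have hcc' : ‖(c:K) - c'‖ ≤ (q:ℝ)^(-(n:ℤ)) := by
        have heq : (c:K) - c' = ((x0:K) - c') - ((x0:K) - c) := by ring
        rw [heq]
        refine (norm_sub_le_max' K _ _).trans (max_le ?_ hx0small)
        exact hxc'.trans (rq_anti q hq (by omega))
      have hcc : c = c' := centers_sep K q π R hq hπ hRsep n c hc c' hc' hcc'
      rw [← hcc] at hxc'
      rw [hx0norm, rq_succ q hq n] at hxc'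
      nlinarith [rq_pos q hq n, hs1norm]
    have hcT : c ∈ T n :=
      (hmemT n c).mpr ⟨c, hc, by rw [sub_self, norm_zero]; positivity⟩
    have hlt : ∀ k, k < n → (x0 ∈ T k ↔ c ∈ T k) := by
      intro k hk
      have hsmall : ‖(x0:K) - c‖ ≤ (q:ℝ)^(-((k+1:ℕ):ℤ)) := by
        exact hx0small.trans (rq_anti q hq (by omega))
      constructor
      · intro h
        obtain ⟨c', hc', h'⟩ := (hmemT k x0).mp h
        refine (hmemT k c).mpr ⟨c', hc', ?_⟩
        have heq : (c:K) - c' = ((x0:K) - c') - ((x0:K) - c) := by ring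
        rw [heq]
        exact (norm_sub_le_max' K _ _).trans (max_le h' (hsmall.trans le_rfl))
      · intro h
        obtain ⟨c', hc', h'⟩ := (hmemT k c).mp h
        refine (hmemT k x0).mpr ⟨c', hc', ?_⟩
        have heq : (x0:K) - c' = ((c:K) - c') + ((x0:K) - c) := by ring
        rw [heq]
        exact (IsUltrametricDist.norm_add_le_max _ _).trans (max_le h' hsmall)
    have hgt : ∀ k, n < k → (x0 ∈ T k ∧ c ∈ T k) := by
      intro k hk
      have hcCk : c ∈ C k := centers_mono K π R hR0 (le_of_lt hk) hc
      have hx0C : x0 ∈ C k := by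
        have hstep := centers_step K π R n hc hs1R
        exact centers_mono K π R hR0 (by omega) hstep
      exact ⟨(hmemT k x0).mpr ⟨x0, hx0C, by rw [sub_self, norm_zero]; positivity⟩,
        (hmemT k c).mpr ⟨c, hcCk, by rw [sub_self, norm_zero]; positivity⟩⟩
    have hdiff : ∀ k, k ≠ n → g k x0 - g k c = 0 := by
      intro k hk
      rcases lt_or_gt_of_ne hk with h | h
      · rw [hg]
        dsimp only
        by_cases hm : x0 ∈ T k
        · rw [if_pos hm, if_pos ((hlt k h).mp hm)]
          ring
        · rw [if_neg hm, if_neg (fun hm2 => hm ((hlt k h).mpr hm2))]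
          ring
      · obtain ⟨h1, h2⟩ := hgt k h
        rw [hg]
        dsimp only
        rw [if_pos h1, if_pos h2]
        ring
    have hgx0n : g n x0 = (2/3:ℝ)^n := by rw [hg]; dsimp only; rw [if_neg hx0T]
    have hgcn : g n c = 0 := by rw [hg]; dsimp only; rw [if_pos hcT]
    rw [hf]
    dsimp only
    rw [← Summable.tsum_sub (hgsummable x0) (hgsummable c),
      tsum_eq_single n (fun k hk => hdiff k hk), hgx0n, hgcn, sub_zero]
  -- the partitions
  have hinj : ∀ n : ℕ, ∀ c ∈ C n, ∀ c' ∈ C n, disc K q c n = disc K q c' n → c = c' := by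
    intro n c hc c' hc' hdd
    refine centers_sep K q π R hq hπ hRsep n c hc c' hc' ?_
    have : c ∈ disc K q c' n := hdd ▸ self_mem_disc K q hq c n
    rw [mem_disc_iff] at this
    exact this
  have hpart : ∀ n : ℕ, IsTaibPartition K q ((C n).image (fun c => disc K q c n)) := by
    intro n
    refine ⟨?_, ?_, ?_⟩
    · intro D hD
      obtain ⟨c, _, rfl⟩ := Finset.mem_image.mp hD
      exact ⟨c, n, rfl⟩
    · intro D hD D' hD' hne
      rw [Finset.mem_coe] at hD hD'
      obtain ⟨c, hc, rfl⟩ := Finset.mem_image.mp hD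
      obtain ⟨c', hc', rfl⟩ := Finset.mem_image.mp hD'
      refine Set.disjoint_left.mpr ?_
      intro x hx hx'
      rw [id_eq, mem_disc_iff] at hx hx'
      refine hne ?_
      have hcc : ‖(c:K) - c'‖ ≤ (q:ℝ)^(-(n:ℤ)) := by
        have : (c:K) - c' = (((x:K) - c') - ((x:K) - c)) := by ring
        rw [this]
        exact (norm_sub_le_max' K _ _).trans (max_le hx' hx)
      rw [centers_sep K q π R hq hπ hRsep n c hc c' hc' hcc]
    · refine Set.eq_univ_iff_forall.mpr fun x => ?_
      obtain ⟨c, hc, hxc⟩ := centers_cover K q π R hq hπ hRcov n x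
      refine Set.mem_sUnion.mpr ⟨disc K q c n, ?_, hxc⟩
      rw [Finset.mem_coe]
      exact Finset.mem_image_of_mem _ hc
  -- lower bound on VPi
  have hVPi : ∀ n : ℕ, ENNReal.ofReal ((4/3:ℝ)^n)
      ≤ VPi K f ((C n).image (fun c => disc K q c n)) := by
    intro n
    rw [VPi, Finset.sum_image (hinj n)]
    have hterm : ∀ c ∈ C n, ENNReal.ofReal ((2/3:ℝ)^n)
        ≤ ⨆ x ∈ disc K q c n, ⨆ y ∈ disc K q c n, ENNReal.ofReal (f x - f y) := by
      intro c hc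
      have hx0 : (c + s1 * π ^ n) ∈ disc K q c n := by
        rw [mem_disc_iff]
        have : ((c + s1 * π ^ n : RoI K):K) - c = (s1:K) * (π:K)^n := by push_cast; ring
        rw [this, norm_mul, hπn n]
        calc ‖(s1:K)‖ * (q:ℝ)^(-(n:ℤ)) ≤ 1 * (q:ℝ)^(-(n:ℤ)) :=
          mul_le_mul_of_nonneg_right s1.2 (rq_pos q hq n).le
          _ = _ := one_mul _
      refine le_iSup₂_of_le (c + s1 * π ^ n) hx0 ?_
      refine le_iSup₂_of_le c (self_mem_disc K q hq c n) ?_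
      rw [hosc n c hc]
    calc ENNReal.ofReal ((4/3:ℝ)^n)
        = (2:ℝ≥0∞)^n * ENNReal.ofReal ((2/3:ℝ)^n) := by
          rw [show ((4/3:ℝ))^n = 2^n * (2/3)^n by rw [← mul_pow]; norm_num,
            ENNReal.ofReal_mul (by positivity), ENNReal.ofReal_pow (by norm_num)]
          norm_num
      _ ≤ (q:ℝ≥0∞)^n * ENNReal.ofReal ((2/3:ℝ)^n) := by
          refine mul_le_mul_left (pow_le_pow_left' ?_ n) _
          have h2q : (2:ℕ) ≤ q := hq
          exact_mod_cast h2q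
      _ = ∑ _c ∈ C n, ENNReal.ofReal ((2/3:ℝ)^n) := by
          rw [Finset.sum_const, centers_card K q π R hq hπ hRsep hRcard n, nsmul_eq_mul]
          push_cast
          ring
      _ ≤ _ := Finset.sum_le_sum hterm
  -- conclusion
  by_contra hne
  have hb : ∀ n : ℕ, ((4:ℝ)/3)^n ≤ (VTaib K q f).toReal := by
    intro n
    refine (ENNReal.ofReal_le_iff_le_toReal hne).mp ?_
    refine le_trans (hVPi n) ?_
    exact le_iSup (fun P : {P : Finset (Set (RoI K)) // IsTaibPartition K q P} => VPi K f P.1)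
      ⟨_, hpart n⟩
  obtain ⟨n, hn⟩ := pow_unbounded_of_one_lt ((VTaib K q f).toReal) (by norm_num : (1:ℝ) < 4/3)
  exact absurd (hb n) (not_le.mpr hn)

end NAKoksma
end
end
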